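/- arXiv:0709.2644 — 9 statements merged into one kernel-verified Lean document; each statement's English description precedes it below -/
import Mathlib

section
/- Let v ∈ Matrix (Fin n) (Fin 2) ℍ satisfy vᴴ·v = (1/2)·1, and put X := fromBlocks 0 (−vᴴ) v 0 ∈ Matrix ((Fin 2) ⊕ (Fin n)) ((Fin 2) ⊕ (Fin n)) ℍ. Then X^(2ν) = (−1/2)^ν · fromBlocks 1 0 0 (2·v·vᴴ) for every natural number ν ≥ 1, X^(2ν+1) = (−1/2)^ν · X for every natural number ν ≥ 0, and for every t ∈ ℝ the exponential (in the real Banach algebra of (2+n)×(2+n) quaternionic matrices) satisfies exp(t·X) = 1 + (cos(t/√2) − 1) · fromBlocks 1 0 0 (2·v·vᴴ) + (√2·sin(t/√2)) · X. -/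
open Matrix

noncomputable section

/-- The quaternions. -/
abbrev ℍq : Type := Quaternion ℝ

/-- The tangent space `m` of `G₂(ℍ^{n+2})`: the `n × 2` quaternionic matrices. -/
abbrev MatH (n : ℕ) : Type := Matrix (Fin n) (Fin 2) ℍq

/-- The curvature tensor of `G₂(ℍ^{n+2})`:
`R(u,v)w = (u vᴴ − v uᴴ) w + w (vᴴ u − uᴴ v)`. -/
def Rcurv {n : ℕ} (u v w : MatH n) : MatH n :=
  (u * vᴴ - v * uᴴ) * w + w * (vᴴ * u - uᴴ * v)

/-- A subset of `m` is a Lie triple system if it is a real-linear subspace which is closed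
under the curvature tensor. -/
def IsLTS {n : ℕ} (s : Set (MatH n)) : Prop :=
  (∃ p : Submodule ℝ (MatH n), (p : Set (MatH n)) = s) ∧
    ∀ u ∈ s, ∀ v ∈ s, ∀ w ∈ s, Rcurv u v w ∈ s

/-- The first row index (row "1" in the paper's 1-based notation). -/
def r0 {n : ℕ} (hn : 2 ≤ n) : Fin n := ⟨0, by omega⟩

/-- The second row index (row "2" in the paper's 1-based notation). -/
def r1 {n : ℕ} (hn : 2 ≤ n) : Fin n := ⟨1, by omega⟩

/-- `q·E₁₁`: the matrix whose only nonzero entry is `q`, in position (1,1). -/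
def E11 {n : ℕ} (hn : 2 ≤ n) (q : ℍq) : MatH n := Matrix.single (r0 hn) 0 q

/-- `q·E₂₂`: the matrix whose only nonzero entry is `q`, in position (2,2). -/
def E22 {n : ℕ} (hn : 2 ≤ n) (q : ℍq) : MatH n := Matrix.single (r1 hn) 1 q

/-- `H₊ = E₁₁`. -/
def Hp {n : ℕ} (hn : 2 ≤ n) : MatH n := E11 hn 1

/-- `H₋ = E₂₂`. -/
def Hm {n : ℕ} (hn : 2 ≤ n) : MatH n := E22 hn 1

/-- The matrix `M_{c,ε}`: entry `(2,1)` equals `c/√2`, entry `(1,2)` equals `ε·conj(c)/√2`,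
all other entries vanish. -/
def Mce {n : ℕ} (hn : 2 ≤ n) (c : ℍq) (ε : ℝ) : MatH n :=
  Matrix.single (r1 hn) 0 ((Real.sqrt 2)⁻¹ • c) +
    Matrix.single (r0 hn) 1 ((ε * (Real.sqrt 2)⁻¹) • star c)

/-- The quaternionic inner product `⟨v,w⟩ = trace (vᴴ w)` on `m`. -/
def qip {n : ℕ} (v w : MatH n) : ℍq := Matrix.trace (vᴴ * w)

/-- The norm on `m`: `‖v‖ = √(Σ |v i j|²)`. -/
def hnorm {n : ℕ} (v : MatH n) : ℝ := Real.sqrt (∑ i, ∑ j, Quaternion.normSq (v i j))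

/-- The symplectic group `Sp(k)` of quaternionic `k × k` matrices. -/
def SpH (k : ℕ) : Set (Matrix (Fin k) (Fin k) ℍq) := {B | Bᴴ * B = 1}

/-- The `j`-th column of a matrix in `m`. -/
def col {n : ℕ} (j : Fin 2) (v : MatH n) : Fin n → ℍq := fun i => v i j

/-- The quaternionic inner product `⟨a,b⟩ = Σᵢ conj(aᵢ)·bᵢ` on `ℍⁿ`. -/
def vip {n : ℕ} (a b : Fin n → ℍq) : ℍq := ∑ i, star (a i) * b i

/-- The imaginary part `Im(q) = (q - conj q)/2` of a quaternion. -/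
def imPart (q : ℍq) : ℍq := (q - star q) / 2

/-- Componentwise right multiplication of a vector by a quaternion. -/
def rightMulV {n : ℕ} (u : Fin n → ℍq) (c : ℍq) : Fin n → ℍq := fun i => u i * c

end

noncomputable section

/-- The block embedding `ι(v) = fromBlocks 0 (−vᴴ) v 0` of `m` into `sp(n+2)`. -/
def iotaBlk {n : ℕ} (u : MatH n) : Matrix (Fin 2 ⊕ Fin n) (Fin 2 ⊕ Fin n) ℍq :=
  Matrix.fromBlocks 0 (-uᴴ) u 0

set_option maxHeartbeats 1000000 in
/-- Powers and exponential of `X = ι(v)` for a direction `v` of characteristic angle `π/4`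
(i.e. `vᴴv = (1/2)·1`); this computes the geodesics of `G₂(ℍ^{n+2})` in such directions. -/
theorem stmt9 (n : ℕ) (hn : 2 ≤ n) (v : MatH n)
    (hv : vᴴ * v = ((1 : ℝ) / 2) • 1) :
    (∀ ν : ℕ, 1 ≤ ν →
      iotaBlk v ^ (2 * ν) =
        (-(1 / 2 : ℝ)) ^ ν • Matrix.fromBlocks 1 0 0 ((2 : ℝ) • (v * vᴴ))) ∧
    (∀ ν : ℕ,
      iotaBlk v ^ (2 * ν + 1) = (-(1 / 2 : ℝ)) ^ ν • iotaBlk v) ∧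
    (∀ t : ℝ,
      NormedSpace.exp (t • iotaBlk v) =
        1 + (Real.cos (t / Real.sqrt 2) - 1) • Matrix.fromBlocks 1 0 0 ((2 : ℝ) • (v * vᴴ))
          + (Real.sqrt 2 * Real.sin (t / Real.sqrt 2)) • iotaBlk v) := by
  set X := iotaBlk v with hXdef
  set P : Matrix (Fin 2 ⊕ Fin n) (Fin 2 ⊕ Fin n) ℍq :=
    Matrix.fromBlocks 1 0 0 ((2 : ℝ) • (v * vᴴ)) with hPdef
  have hXsq : X * X = (-(1/2 : ℝ)) • P := by
    rw [hXdef, iotaBlk, hPdef, Matrix.fromBlocks_multiply, Matrix.fromBlocks_smul]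
    have h1 : (0 : Matrix (Fin 2) (Fin 2) ℍq) * 0 + -vᴴ * v = (-(1/2 : ℝ)) • 1 := by
      simp [hv]
    have h4 : v * -vᴴ + 0 * 0 = (-(1/2 : ℝ)) • ((2:ℝ) • (v * vᴴ)) := by
      rw [smul_smul]
      norm_num
    rw [h1, h4]
    simp
  have hPX : P * X = X := by
    rw [hXdef, iotaBlk, hPdef, Matrix.fromBlocks_multiply]
    rw [show ((2:ℝ) • (v * vᴴ)) * v = v by
      rw [Matrix.smul_mul, Matrix.mul_assoc, hv, Matrix.mul_smul, smul_smul, Matrix.mul_one]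
      norm_num]
    simp
  have hP2 : P * P = P := by
    rw [hPdef, Matrix.fromBlocks_multiply]
    rw [show ((2:ℝ) • (v * vᴴ)) * ((2:ℝ) • (v * vᴴ)) = (2:ℝ) • (v * vᴴ) by
      rw [Matrix.smul_mul, Matrix.mul_smul, smul_smul, Matrix.mul_assoc,
        ← Matrix.mul_assoc vᴴ, hv, Matrix.smul_mul, Matrix.one_mul, Matrix.mul_smul, smul_smul]
      norm_num]
    simp
  have hPpowX : ∀ ν : ℕ, P ^ ν * X = X := by
    intro ν
    induction ν with
    | zero => simp
    | succ k ih => rw [pow_succ, Matrix.mul_assoc, hPX, ih]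
  have heven : ∀ ν : ℕ, 1 ≤ ν → X ^ (2 * ν) = (-(1/2 : ℝ)) ^ ν • P := by
    intro ν hν
    obtain ⟨k, rfl⟩ := Nat.exists_eq_add_of_le hν
    rw [pow_mul, sq, hXsq, smul_pow, add_comm 1 k, IsIdempotentElem.pow_succ_eq k hP2]
  have hodd : ∀ ν : ℕ, X ^ (2 * ν + 1) = (-(1/2 : ℝ)) ^ ν • X := by
    intro ν
    rw [pow_succ, pow_mul, sq, hXsq, smul_pow, Matrix.smul_mul, hPpowX]
  refine ⟨heven, hodd, ?_⟩
  intro t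
  set c := t / Real.sqrt 2 with hc
  have hs : ∀ m : ℕ, (Real.sqrt 2) ^ (2 * m) = 2 ^ m := by
    intro m; rw [pow_mul, Real.sq_sqrt (by norm_num : (0:ℝ) ≤ 2)]
  have hsne : Real.sqrt 2 ≠ 0 := by positivity
  have hneg : ∀ m : ℕ, (-(1/2 : ℝ)) ^ m = (-1) ^ m * (1/2) ^ m := by
    intro m; rw [← neg_one_mul, mul_pow]
  have keyE : ∀ m : ℕ, (-1:ℝ) ^ m * c ^ (2*m) / (Nat.factorial (2*m) : ℝ)
      = ((Nat.factorial (2*m) : ℝ))⁻¹ * (t ^ (2*m) * (-(1/2 : ℝ)) ^ m) := by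
    intro m
    have hfac : ((Nat.factorial (2*m) : ℝ)) ≠ 0 := Nat.cast_ne_zero.mpr (Nat.factorial_ne_zero _)
    rw [hc, div_pow, hs, hneg]
    field_simp
    have h2 : (2:ℝ)^m * (1/2)^m = 1 := by rw [← mul_pow]; norm_num
    linear_combination (-(t^(2*m))) * h2
  have keyO : ∀ m : ℕ, Real.sqrt 2 * ((-1:ℝ) ^ m * c ^ (2*m+1) / (Nat.factorial (2*m+1) : ℝ))
      = ((Nat.factorial (2*m+1) : ℝ))⁻¹ * (t ^ (2*m+1) * (-(1/2 : ℝ)) ^ m) := by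
    intro m
    have hfac : ((Nat.factorial (2*m+1) : ℝ)) ≠ 0 := Nat.cast_ne_zero.mpr (Nat.factorial_ne_zero _)
    rw [hc, pow_succ, div_pow, hs, hneg]
    field_simp
    have h2 : (2:ℝ)^m * (1/2)^m = 1 := by rw [← mul_pow]; norm_num
    linear_combination (-(t^(2*m+1))) * h2
  have hE : HasSum (fun k : ℕ => ((Nat.factorial (2*k) : ℝ))⁻¹ • (t • X) ^ (2*k))
      (1 + (Real.cos c - 1) • P) := by
    have h1 : HasSum (fun m : ℕ => ((-1:ℝ) ^ m * c ^ (2*m) / (Nat.factorial (2*m) : ℝ)) • P)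
        (Real.cos c • P) := (Real.hasSum_cos c).smul_const P
    have h2 : HasSum (fun m : ℕ => if m = 0 then (1 : Matrix (Fin 2 ⊕ Fin n) (Fin 2 ⊕ Fin n) ℍq) - P else 0)
        (1 - P) := hasSum_ite_eq 0 (1 - P)
    have h3 := h1.add h2
    have hfun : (fun k : ℕ => ((Nat.factorial (2*k) : ℝ))⁻¹ • (t • X) ^ (2*k))
        = fun m : ℕ => ((-1:ℝ) ^ m * c ^ (2*m) / (Nat.factorial (2*m) : ℝ)) • P
            + (if m = 0 then 1 - P else 0) := by
      funext m
      cases m with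
      | zero => simp
      | succ k =>
        rw [smul_pow, heven (k+1) (Nat.succ_le_succ (Nat.zero_le k)), keyE (k+1)]
        simp [smul_smul, mul_assoc]
    rw [hfun]
    have hval : Real.cos c • P + (1 - P) = 1 + (Real.cos c - 1) • P := by
      rw [sub_smul, one_smul]; abel
    rw [← hval]
    exact h3
  have hO : HasSum (fun k : ℕ => ((Nat.factorial (2*k+1) : ℝ))⁻¹ • (t • X) ^ (2*k+1))
      ((Real.sqrt 2 * Real.sin c) • X) := by
    have h1 := ((Real.hasSum_sin c).mul_left (Real.sqrt 2)).smul_const X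
    have hfun : (fun k : ℕ => ((Nat.factorial (2*k+1) : ℝ))⁻¹ • (t • X) ^ (2*k+1))
        = fun m : ℕ => (Real.sqrt 2 * ((-1:ℝ) ^ m * c ^ (2*m+1) / (Nat.factorial (2*m+1) : ℝ))) • X := by
      funext m
      rw [smul_pow, hodd m, keyO m, smul_smul, smul_smul]
      congr 1
      ring
    rw [hfun]
    exact h1
  have hsum := HasSum.even_add_odd (f := fun k : ℕ => ((Nat.factorial k : ℝ))⁻¹ • (t • X) ^ k) hE hO
  rw [NormedSpace.exp_eq_tsum (𝕂 := ℝ)]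
  exact hsum.tsum_eq


end
end

section
/- Let v ∈ Matrix (Fin n) (Fin 2) ℍ satisfy vᴴ·v = (1/2)·1, put X := fromBlocks 0 (−vᴴ) v 0, let V₀ := {x : ((Fin 2) ⊕ (Fin n)) → ℍ such that x vanishes on all coordinates of the Fin n summand}, and for t ∈ ℝ let T_t be the left-ℍ-linear map x ↦ x·exp(t·X) (row vector times matrix). Then for every t ∈ ℝ: T_t(V₀) = V₀ holds if and only if t ∈ √2·π·ℤ, and if t ∉ √2·π·ℤ then T_t(V₀) ∩ V₀ = {0}. (Geometrically: for a geodesic γ_v of G₂(ℍ^{n+2}) starting at V' in a direction of characteristic angle π/4, at each time either γ_v(t) = V' or γ_v(t) ∩ V' = {0}.) -/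
open Matrix

noncomputable section

/-- The subspace `V' ⊆ ℍ^{n+2}` of row vectors supported on the first two coordinates. -/
def Vzero (n : ℕ) : Set ((Fin 2 ⊕ Fin n) → ℍq) :=
  {x | ∀ i : Fin n, x (Sum.inr i) = 0}

open scoped Nat
section ExpAux
open NormedSpace


variable {A : Type*} [Ring A] [Algebra ℝ A] [TopologicalSpace A] [IsTopologicalRing A]
  [T2Space A] [ContinuousSMul ℝ A]

lemma pow_odd_of_cube (Y : A) (hY : Y ^ 3 = -Y) (k : ℕ) :
    Y ^ (2 * k + 1) = ((-1 : ℝ) ^ k) • Y := by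
  induction k with
  | zero => simp
  | succ k ih =>
    have h1 : 2 * (k + 1) + 1 = (2 * k + 1) + 2 := by ring
    rw [h1, pow_add, ih, smul_mul_assoc,
      show Y * Y ^ 2 = Y ^ 3 from (pow_succ' Y 2).symm, hY, smul_neg, ← neg_smul]
    congr 1
    rw [pow_succ]
    ring

lemma pow_even_of_cube (Y : A) (hY : Y ^ 3 = -Y) (k : ℕ) :
    Y ^ (2 * (k + 1)) = ((-1 : ℝ) ^ k) • Y ^ 2 := by
  have h1 : 2 * (k + 1) = (2 * k + 1) + 1 := by ring
  rw [h1, pow_succ, pow_odd_of_cube Y hY, smul_mul_assoc, ← pow_two]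

set_option maxHeartbeats 1000000 in
lemma exp_cube_neg (Y : A) (hY : Y ^ 3 = -Y) (s : ℝ) :
    exp (s • Y) = 1 + Real.sin s • Y + (1 - Real.cos s) • (Y ^ 2) := by
  rw [exp_eq_tsum ℝ]
  have hodd : HasSum (fun k : ℕ => ((Nat.factorial (2 * k + 1) : ℝ))⁻¹ • (s • Y) ^ (2 * k + 1))
      (Real.sin s • Y) := by
    have h := (Real.hasSum_sin s).smul_const Y
    convert h using 2 with k
    rw [smul_pow, pow_odd_of_cube Y hY, smul_smul, smul_smul]
    congr 1
    field_simp
  have hc := Real.hasSum_cos s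
  have h1 : HasSum (fun n : ℕ => (-1 : ℝ) ^ (n + 1) * s ^ (2 * (n + 1)) / ((2 * (n + 1))!))
      (Real.cos s - 1) := by
    have := (hasSum_nat_add_iff' (f := fun n : ℕ => (-1 : ℝ) ^ n * s ^ (2 * n) / ((2 * n)!)) 1).mpr hc
    simpa using this
  have h2 : HasSum (fun n : ℕ => (-1 : ℝ) ^ n * s ^ (2 * (n + 1)) / ((2 * (n + 1))!))
      (1 - Real.cos s) := by
    have e : (fun n : ℕ => (-1 : ℝ) ^ n * s ^ (2 * (n + 1)) / ((2 * (n + 1))!)) =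
        fun n => -((-1 : ℝ) ^ (n + 1) * s ^ (2 * (n + 1)) / ((2 * (n + 1))!)) := by
      funext n; rw [pow_succ]; ring
    rw [e, show (1 - Real.cos s) = -(Real.cos s - 1) by ring]
    exact h1.neg
  have heven : HasSum (fun k : ℕ => ((Nat.factorial (2 * k) : ℝ))⁻¹ • (s • Y) ^ (2 * k))
      (1 + (1 - Real.cos s) • Y ^ 2) := by
    have h3 := h2.smul_const (Y ^ 2)
    have h4 : HasSum (fun k : ℕ => ((Nat.factorial (2 * (k + 1)) : ℝ))⁻¹ • (s • Y) ^ (2 * (k + 1)))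
        ((1 - Real.cos s) • Y ^ 2) := by
      convert h3 using 2 with k
      rw [smul_pow, pow_even_of_cube Y hY, smul_smul, smul_smul]
      congr 1
      field_simp
    have h5 := (hasSum_nat_add_iff
      (f := fun k : ℕ => (((2 * k)! : ℝ))⁻¹ • (s • Y) ^ (2 * k)) 1).mp h4
    simpa [add_comm] using h5
  have H := HasSum.even_add_odd (f := fun n : ℕ => ((Nat.factorial n : ℝ))⁻¹ • (s • Y) ^ n)
    heven hodd
  beta_reduce
  rw [H.tsum_eq]
  abel

end ExpAux

lemma X_sq {n : ℕ} (v : MatH n) :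
    iotaBlk v * iotaBlk v = Matrix.fromBlocks (-(vᴴ * v)) 0 0 (-(v * vᴴ)) := by
  simp [iotaBlk, Matrix.fromBlocks_multiply]

lemma X_cube {n : ℕ} (v : MatH n) (hv : vᴴ * v = ((1 : ℝ) / 2) • 1) :
    iotaBlk v ^ 3 = (-(1 / 2 : ℝ)) • iotaBlk v := by
  rw [pow_succ, pow_two, X_sq]
  simp only [iotaBlk, Matrix.fromBlocks_multiply, Matrix.fromBlocks_smul, neg_smul,
    Matrix.fromBlocks_neg]
  congr 1 <;>
    simp [Matrix.mul_assoc, hv, Matrix.mul_smul, Matrix.smul_mul, smul_smul] <;>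
    norm_num

lemma key_inj {n : ℕ} (v : MatH n) (hv : vᴴ * v = ((1 : ℝ) / 2) • 1)
    (c : Fin 2 → ℍq) (h : ∀ i, ∑ j, c j * star (v i j) = 0) : ∀ j, c j = 0 := by
  intro j'
  have H : ∑ j, c j * ((vᴴ * v) j j') = 0 := by
    calc ∑ j, c j * ((vᴴ * v) j j')
        = ∑ j, ∑ i, c j * (star (v i j) * v i j') := by
          simp [Matrix.mul_apply, Matrix.conjTranspose_apply, Finset.mul_sum]
      _ = ∑ i, ∑ j, (c j * star (v i j)) * v i j' := by
          rw [Finset.sum_comm]; simp [mul_assoc]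
      _ = 0 := by
          simp only [← Finset.sum_mul, h, zero_mul, Finset.sum_const_zero]
  rw [hv] at H
  simp only [Matrix.smul_apply, Matrix.one_apply, smul_ite, smul_zero, mul_ite, mul_zero,
    mul_smul_comm, mul_one, Finset.sum_ite_eq', Finset.mem_univ, if_true] at H
  have := smul_eq_zero.mp H
  norm_num at this
  exact this

/-- Lemma 4.3: along a geodesic of `G₂(ℍ^{n+2})` starting at `V'` in a direction of
characteristic angle `π/4`, at each time `t` either `γ_v(t) = V'` (iff `t ∈ √2·π·ℤ`),
or `γ_v(t) ∩ V' = {0}`. -/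
theorem stmt10 (n : ℕ) (hn : 2 ≤ n) (v : MatH n)
    (hv : vᴴ * v = ((1 : ℝ) / 2) • 1) (t : ℝ) :
    (((fun x => Matrix.vecMul x (NormedSpace.exp (t • iotaBlk v))) '' Vzero n = Vzero n)
        ↔ ∃ k : ℤ, t = Real.sqrt 2 * Real.pi * k) ∧
    ((¬ ∃ k : ℤ, t = Real.sqrt 2 * Real.pi * k) →
      ((fun x => Matrix.vecMul x (NormedSpace.exp (t • iotaBlk v))) '' Vzero n)
          ∩ Vzero n = {0}) := by
  have hs2 : Real.sqrt 2 ≠ 0 := by positivity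
  set X := iotaBlk v with hX
  set s := t / Real.sqrt 2 with hsdef
  set Y := Real.sqrt 2 • X with hYdef
  set E := NormedSpace.exp (t • X) with hEdef
  set a := Real.sqrt 2 * Real.sin s with hadef
  have hY3 : Y ^ 3 = -Y := by
    rw [hYdef, smul_pow, X_cube v hv, smul_smul]
    rw [show Real.sqrt 2 ^ 3 * -(1 / 2) = -Real.sqrt 2 by
      rw [pow_succ, Real.sq_sqrt (by norm_num : (2:ℝ) ≥ 0)]; ring]
    rw [neg_smul]
  have htX : t • X = s • Y := by
    rw [hYdef, smul_smul, hsdef, div_mul_cancel₀ _ hs2]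
  have hY2 : Y ^ 2 = (2 : ℝ) • (X * X) := by
    rw [hYdef, smul_pow, Real.sq_sqrt (by norm_num : (0:ℝ) ≤ 2), sq]
  have hE : E = 1 + a • X + (2 * (1 - Real.cos s)) • (X * X) := by
    rw [hEdef, htX, exp_cube_neg Y hY3 s, hY2, hYdef, smul_smul, smul_smul, hadef,
      mul_comm (Real.sin s), mul_comm (1 - Real.cos s)]
  -- entries of E
  have hE1 : ∀ (j : Fin 2) (i : Fin n), E (Sum.inl j) (Sum.inr i) = -(a • star (v i j)) := by
    intro j i
    rw [hE, X_sq]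
    simp [Matrix.one_apply, hX, iotaBlk, Matrix.conjTranspose_apply]
  have hE2 : ∀ (j j' : Fin 2), E (Sum.inl j) (Sum.inl j') =
      if j = j' then Real.cos s • (1 : ℍq) else 0 := by
    intro j j'
    rw [hE, X_sq]
    by_cases hj : j = j' <;>
      simp [Matrix.one_apply, hX, iotaBlk, hj, hv, smul_smul] <;> module
  -- action of vecMul on Vzero
  have hT1 : ∀ x ∈ Vzero n, ∀ i : Fin n,
      Matrix.vecMul x E (Sum.inr i) = -(a • ∑ j, x (Sum.inl j) * star (v i j)) := by
    intro x hx i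
    have hx' : ∀ i' : Fin n, x (Sum.inr i') = 0 := hx
    simp only [Matrix.vecMul, dotProduct, Fintype.sum_sum_type]
    simp only [hx', zero_mul, Finset.sum_const_zero, add_zero]
    rw [Finset.smul_sum, ← Finset.sum_neg_distrib]
    refine Finset.sum_congr rfl fun j _ => ?_
    rw [hE1 j i, mul_neg, mul_smul_comm]
  have hT2 : ∀ x ∈ Vzero n, ∀ j' : Fin 2,
      Matrix.vecMul x E (Sum.inl j') = Real.cos s • x (Sum.inl j') := by
    intro x hx j'
    have hx' : ∀ i' : Fin n, x (Sum.inr i') = 0 := hx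
    simp only [Matrix.vecMul, dotProduct, Fintype.sum_sum_type]
    simp only [hx', zero_mul, Finset.sum_const_zero, add_zero]
    simp [hE2, mul_ite, mul_smul_comm, Finset.sum_ite_eq']
  -- relation between the time condition and sin s
  have hiff : (∃ k : ℤ, t = Real.sqrt 2 * Real.pi * k) ↔ Real.sin s = 0 := by
    constructor
    · rintro ⟨k, rfl⟩
      have : s = (k : ℝ) * Real.pi := by
        rw [hsdef]; field_simp
      rw [this]
      exact Real.sin_int_mul_pi k
    · intro h
      obtain ⟨k, hk⟩ := Real.sin_eq_zero_iff.mp h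
      refine ⟨k, ?_⟩
      have : t = Real.sqrt 2 * s := by rw [hsdef]; field_simp
      rw [this, ← hk]; ring
  -- the kernel property when sin s ≠ 0
  have hker : Real.sin s ≠ 0 → ∀ x ∈ Vzero n, Matrix.vecMul x E ∈ Vzero n → x = 0 := by
    intro hsin x hx hxE
    have ha : a ≠ 0 := mul_ne_zero hs2 hsin
    have hz : ∀ i, ∑ j, x (Sum.inl j) * star (v i j) = 0 := by
      intro i
      have := hxE i
      rw [hT1 x hx i, neg_eq_zero] at this
      rcases smul_eq_zero.mp this with h | h
      · exact absurd h ha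
      · exact h
    have hc := key_inj v hv _ hz
    funext p
    cases p with
    | inl j => exact hc j
    | inr i => exact hx i
  have hzero_mem : (0 : (Fin 2 ⊕ Fin n) → ℍq) ∈ Vzero n := fun i => rfl
  have part2 : (¬ ∃ k : ℤ, t = Real.sqrt 2 * Real.pi * k) →
      ((fun x => Matrix.vecMul x E) '' Vzero n) ∩ Vzero n = {0} := by
    intro hk
    have hsin : Real.sin s ≠ 0 := fun h => hk (hiff.mpr h)
    ext y
    simp only [Set.mem_inter_iff, Set.mem_image, Set.mem_singleton_iff]
    constructor
    · rintro ⟨⟨x, hx, rfl⟩, hy⟩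
      rw [hker hsin x hx hy]
      exact Matrix.zero_vecMul E
    · rintro rfl
      exact ⟨⟨0, hzero_mem, Matrix.zero_vecMul E⟩, hzero_mem⟩
  refine ⟨⟨?_, ?_⟩, part2⟩
  · intro him
    by_contra hk
    have h2 := part2 hk
    rw [him, Set.inter_self] at h2
    have hw : (fun p => if p = Sum.inl 0 then (1 : ℍq) else 0) ∈ Vzero n := by
      intro i; simp
    rw [h2] at hw
    have := congrFun hw (Sum.inl 0)
    simp at this
  · rintro hk
    have hsin : Real.sin s = 0 := hiff.mp hk
    have ha : a = 0 := by rw [hadef, hsin, mul_zero]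
    have hcos : Real.cos s ≠ 0 := by
      intro h
      have := Real.sin_sq_add_cos_sq s
      rw [hsin, h] at this
      norm_num at this
    apply Set.Subset.antisymm
    · rintro y ⟨x, hx, rfl⟩ i
      beta_reduce
      rw [hT1 x hx i, ha, zero_smul, neg_zero]
    · intro y hy
      refine ⟨(Real.cos s)⁻¹ • y, fun i => by simp [hy i], ?_⟩
      funext p
      beta_reduce
      have hmem : (Real.cos s)⁻¹ • y ∈ Vzero n := fun i => by simp [hy i]
      cases p with
      | inl j =>
        rw [hT2 _ hmem j]
        simp [smul_smul, mul_inv_cancel₀ hcos]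
      | inr i =>
        rw [hT1 _ hmem i, ha, zero_smul, neg_zero, hy i]

end
end

section
/- Write L₊ := {v ∈ m : the second column of v is 0} and L₋ := {v ∈ m : the first column of v is 0}, and for v ∈ m let v₁, v₂ ∈ ℍⁿ denote its columns; for a,b ∈ ℍⁿ put ⟨a,b⟩ := Σᵢ conj(aᵢ)·bᵢ and Im(q) := (q − conj(q))/2 for q ∈ ℍ. Then for all w ∈ m with columns w₁, w₂: (i) for u, v ∈ L₊, the columns of R(u,v)w are (u₁·⟨v₁,w₁⟩ − v₁·⟨u₁,w₁⟩ + 2·w₁·Im⟨v₁,u₁⟩ , u₁·⟨v₁,w₂⟩ − v₁·⟨u₁,w₂⟩); (ii) for u ∈ L₊ and v ∈ L₋, the columns of R(u,v)w are (w₂·⟨v₂,u₁⟩ , −w₁·⟨u₁,v₂⟩); (iii) for u, v ∈ L₋, the columns of R(u,v)w are (u₂·⟨v₂,w₁⟩ − v₂·⟨u₂,w₁⟩ , u₂·⟨v₂,w₂⟩ − v₂·⟨u₂,w₂⟩ + 2·w₂·Im⟨v₂,u₂⟩). -/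
open Matrix

noncomputable section

lemma aux_two_ne : (2:ℍq) ≠ 0 := fun h => two_ne_zero (α := ℝ) (congrArg QuaternionAlgebra.re h)

lemma aux_half2 (x : ℍq) : (2:ℝ) • (x/2) = x := by
  rw [← Quaternion.coe_mul_eq_smul, Quaternion.coe_commutes,
    show ((2:ℝ):ℍq) = 2 from rfl, div_mul_cancel₀ x aux_two_ne]

lemma aux_imP (a b : ℍq) : (2:ℝ) • (a * imPart b) = a * (b - star b) := by
  rw [imPart, ← mul_div_assoc, aux_half2]

end

noncomputable section

/-- The explicit columnwise description (Equations (10)–(12)) of the curvature tensor of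
`G₂(ℍ^{n+2})` on the subspaces `L₊` (second column zero) and `L₋` (first column zero). -/
theorem stmt11 (n : ℕ) (hn : 2 ≤ n) (u v w : MatH n) :
    -- (i) u, v ∈ L₊
    ((∀ i, u i 1 = 0) → (∀ i, v i 1 = 0) → ∀ i : Fin n,
      Rcurv u v w i 0 =
        u i 0 * vip (_root_.col 0 v) (_root_.col 0 w) - v i 0 * vip (_root_.col 0 u) (_root_.col 0 w)
          + (2 : ℝ) • (w i 0 * imPart (vip (_root_.col 0 v) (_root_.col 0 u))) ∧
      Rcurv u v w i 1 =
        u i 0 * vip (_root_.col 0 v) (_root_.col 1 w) - v i 0 * vip (_root_.col 0 u) (_root_.col 1 w)) ∧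
    -- (ii) u ∈ L₊, v ∈ L₋
    ((∀ i, u i 1 = 0) → (∀ i, v i 0 = 0) → ∀ i : Fin n,
      Rcurv u v w i 0 = w i 1 * vip (_root_.col 1 v) (_root_.col 0 u) ∧
      Rcurv u v w i 1 = -(w i 0 * vip (_root_.col 0 u) (_root_.col 1 v))) ∧
    -- (iii) u, v ∈ L₋
    ((∀ i, u i 0 = 0) → (∀ i, v i 0 = 0) → ∀ i : Fin n,
      Rcurv u v w i 0 =
        u i 1 * vip (_root_.col 1 v) (_root_.col 0 w) - v i 1 * vip (_root_.col 1 u) (_root_.col 0 w) ∧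
      Rcurv u v w i 1 =
        u i 1 * vip (_root_.col 1 v) (_root_.col 1 w) - v i 1 * vip (_root_.col 1 u) (_root_.col 1 w)
          + (2 : ℝ) • (w i 1 * imPart (vip (_root_.col 1 v) (_root_.col 1 u)))) := by
  refine ⟨fun hu hv i => ?_, fun hu hv i => ?_, fun hu hv i => ?_⟩ <;>
  · constructor <;>
    · first
      | (rw [aux_imP]; skip)
      | skip
      simp only [Rcurv, Matrix.add_apply, Matrix.sub_apply, Matrix.mul_apply,
        Matrix.conjTranspose_apply, vip, _root_.col, Fin.sum_univ_two, hu, hv,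
        star_zero, mul_zero, zero_mul, add_zero, zero_add, sub_zero, zero_sub, sub_self,
        neg_zero, star_sum, StarMul.star_mul, star_star,
        Finset.mul_sum, Finset.sum_mul, mul_sub, sub_mul, neg_neg]
      simp only [← Finset.sum_sub_distrib, ← Finset.sum_add_distrib, ← Finset.sum_neg_distrib]
      refine Finset.sum_congr rfl fun k _ => by noncomm_ring


end
end

section
/- Let m' ⊆ m be a Lie triple system with H₊ ∈ m' and H₋ ∈ m', let m_{λ₁} := {v ∈ m : the second column of v is 0 and v_{1,1} = v_{2,1} = 0}, and suppose m_{λ₁} ∩ m' ≠ {0}. Set K := {c ∈ ℍ : c·E₁₁ ∈ m'}. Then: (i) K is an ℝ-subspace of ℍ containing 1 that is closed under multiplication (hence a subfield of ℍ); (ii) for every v ∈ m_{λ₁} ∩ m' and every c ∈ K, the matrix v·c (whose first column is v₁·c and whose second column is 0) again lies in m_{λ₁} ∩ m'; (iii) for all v, w ∈ m_{λ₁} ∩ m', the quaternion ⟨v₁, w₁⟩ := Σᵢ conj((v₁)ᵢ)·(w₁)ᵢ lies in K; and (iv) for every v ∈ m_{λ₁} ∩ m' and every c ∈ ℍ with Re(conj(c)·k)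 = 0 for all k ∈ K, the matrix v·c is Re-orthogonal to m_{λ₁} ∩ m'. -/
open Matrix

noncomputable section

lemma aux1 {n : ℕ} (hn : 2 ≤ n) (c : ℍq) (v w : MatH n)
    (hv1 : ∀ i, v i 1 = 0) (hv0 : v (r0 hn) 0 = 0)
    (hw1 : ∀ i, w i 1 = 0) (hw0 : w (r0 hn) 0 = 0) :
    Rcurv (E11 hn c) v w =
      Matrix.single (r0 hn) 0 (c * vip (_root_.col 0 v) (_root_.col 0 w)) := by
  refine Matrix.ext fun i j => ?_
  simp only [Rcurv, E11, Matrix.add_apply, Matrix.mul_apply, Matrix.sub_apply,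
    Matrix.conjTranspose_apply, Matrix.single, Matrix.of_apply,
    Fin.sum_univ_two, vip, _root_.col, hv1, hw1, star_zero, mul_zero, zero_mul, add_zero,
    mul_ite, ite_mul]
  simp only [and_true, ite_and, apply_ite (star : ℍq → ℍq), Finset.sum_ite_eq,
    Finset.mem_univ, if_true, (by decide : ((0:Fin 2) = 1) = False), if_false, hv0,
    star_zero, mul_zero, zero_mul, Finset.sum_const_zero, sub_zero, add_zero, zero_sub,
    zero_mul, mul_neg, mul_ite, ite_mul]
  by_cases hj : (0 : Fin 2) = j
  · subst hj
    simp only [if_pos rfl, if_true, hw0, hv0, mul_zero, zero_mul, neg_zero, add_zero,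
      Finset.sum_ite_eq, Finset.mem_univ, sub_zero]
    by_cases hi : r0 hn = i
    · subst hi
      simp only [if_pos rfl, if_true, hv0, star_zero, mul_zero, zero_mul, sub_zero,
        Finset.mul_sum, mul_assoc, add_zero, ite_self]
    · simp only [if_neg hi, zero_add, zero_sub, neg_zero, mul_zero, zero_mul,
        Finset.sum_const_zero, add_zero, neg_mul, Finset.sum_ite_eq, Finset.mem_univ,
        if_true, hv0, mul_neg, ite_mul, Finset.sum_neg_distrib, hw0, neg_eq_zero, ite_self]
  · have hj1 : j = 1 := by omega
    subst hj1
    simp only [if_neg hj, hw1, hv1, mul_zero, zero_mul, Finset.sum_const_zero, add_zero,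
      sub_zero, zero_sub, neg_zero, mul_neg, star_zero, ite_self]

lemma aux2 {n : ℕ} (hn : 2 ≤ n) (c : ℍq) (v : MatH n)
    (hv1 : ∀ i, v i 1 = 0) (hv0 : v (r0 hn) 0 = 0) :
    Rcurv v (E11 hn c) (Hp hn) = Matrix.of (fun i j => v i j * star c) := by
  refine Matrix.ext fun i j => ?_
  simp only [Rcurv, E11, Hp, Matrix.add_apply, Matrix.mul_apply, Matrix.sub_apply,
    Matrix.conjTranspose_apply, Matrix.single, Matrix.of_apply,
    Fin.sum_univ_two, hv1, star_zero, mul_zero, zero_mul, add_zero,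
    mul_ite, ite_mul]
  simp only [and_true, ite_and, apply_ite (star : ℍq → ℍq), Finset.sum_ite_eq,
    Finset.mem_univ, if_true, (by decide : ((0:Fin 2) = 1) = False), if_false, hv0,
    star_zero, mul_zero, zero_mul, Finset.sum_const_zero, sub_zero, add_zero, zero_sub,
    zero_mul, mul_neg, mul_ite, ite_mul, ite_self]
  by_cases hj : (0 : Fin 2) = j
  · subst hj
    simp [hv0, mul_one]
  · have hj1 : j = 1 := by omega
    subst hj1
    simp [hv1, if_neg hj]


/-- Lemma 5.4: structure of the root space `m_{λ₁} ∩ m'` of a rank-2 Lie triple system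
`m'` containing `H₊, H₋`, governed by the subfield `K = {c : c·E₁₁ ∈ m'}` of `ℍ`. -/
theorem stmt12 (n : ℕ) (hn : 2 ≤ n) (m' : Set (MatH n)) (hlts : IsLTS m')
    (hHp : Hp hn ∈ m') (hHm : Hm hn ∈ m')
    (S : Set (MatH n))
    (hS : S = {v | (∀ i, v i 1 = 0) ∧ v (r0 hn) 0 = 0 ∧ v (r1 hn) 0 = 0} ∩ m')
    (hne : ∃ v ∈ S, v ≠ 0)
    (K : Set ℍq) (hK : K = {c | Matrix.single (r0 hn) (0 : Fin 2) c ∈ m'}) :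
    -- (i) K is a real subspace of ℍ containing 1 and closed under multiplication
    ((1 : ℍq) ∈ K ∧ (∀ c ∈ K, ∀ d ∈ K, c * d ∈ K) ∧
      ∃ p : Submodule ℝ ℍq, (p : Set ℍq) = K) ∧
    -- (ii) m_{λ₁} ∩ m' is invariant under right multiplication by K
    (∀ v ∈ S, ∀ c ∈ K, (Matrix.of fun i j => v i j * c) ∈ S) ∧
    -- (iii) the inner products of first columns lie in K
    (∀ v ∈ S, ∀ w ∈ S, vip (_root_.col 0 v) (_root_.col 0 w) ∈ K) ∧
    -- (iv) right multiplication by c ⟂ K maps m_{λ₁} ∩ m' into its Re-orthocomplement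
    (∀ v ∈ S, ∀ c : ℍq, (∀ d ∈ K, (star c * d).re = 0) →
      ∀ w ∈ S, (qip (Matrix.of fun i j => v i j * c) w).re = 0) := by
  obtain ⟨⟨p, hp⟩, hR⟩ := hlts
  -- the linear map c ↦ c·E₁₁ and K as a submodule
  set L : ℍq →ₗ[ℝ] MatH n :=
    { toFun := fun c => Matrix.single (r0 hn) 0 c,
      map_add' := fun a b => Matrix.single_add _ _ a b,
      map_smul' := fun r a => (Matrix.smul_single r _ _ a).symm } with hL
  have hKP : ((p.comap L : Submodule ℝ ℍq) : Set ℍq) = K := by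
    ext c
    simp only [hK, Submodule.mem_comap, SetLike.mem_coe, Set.mem_setOf_eq, hL,
      LinearMap.coe_mk, AddHom.coe_mk, ← hp, SetLike.mem_coe]
  have hmemK : ∀ c : ℍq, c ∈ K ↔ Matrix.single (r0 hn) (0 : Fin 2) c ∈ m' := by
    intro c; rw [hK]; rfl
  have h1K : (1 : ℍq) ∈ K := (hmemK 1).2 hHp
  have hsmulK : ∀ (r : ℝ), ∀ c ∈ K, (r : ℍq) * c ∈ K := by
    intro r c hc
    rw [← hKP] at hc ⊢
    rw [Quaternion.coe_mul_eq_smul]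
    exact Submodule.smul_mem _ r hc
  have hstarK : ∀ c ∈ K, star c ∈ K := by
    intro c hc
    rw [Quaternion.star_eq_two_re_sub]
    rw [← hKP] at hc ⊢
    have h2 : ((2 * c.re : ℝ) : ℍq) ∈ (p.comap L : Submodule ℝ ℍq) := by
      have := hsmulK (2 * c.re) 1 h1K
      rw [mul_one, ← hKP] at this
      exact this
    exact Submodule.sub_mem _ h2 hc
  -- (iii) generalized: c·⟨v₁,w₁⟩ ∈ K for c ∈ K
  have hgen : ∀ c ∈ K, ∀ v ∈ S, ∀ w ∈ S, c * vip (_root_.col 0 v) (_root_.col 0 w) ∈ K := by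
    intro c hc v hv w hw
    rw [hS] at hv hw
    obtain ⟨⟨hv1, hv0, -⟩, hvm⟩ := hv
    obtain ⟨⟨hw1, hw0, -⟩, hwm⟩ := hw
    have hE : E11 hn c ∈ m' := (hmemK c).1 hc
    have h := hR (E11 hn c) hE v hvm w hwm
    rw [aux1 hn c v w hv1 hv0 hw1 hw0] at h
    exact (hmemK _).2 h
  have hiii : ∀ v ∈ S, ∀ w ∈ S, vip (_root_.col 0 v) (_root_.col 0 w) ∈ K := by
    intro v hv w hw
    have := hgen 1 h1K v hv w hw
    rwa [one_mul] at this
  -- (ii)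
  have hii : ∀ v ∈ S, ∀ c ∈ K, (Matrix.of fun i j => v i j * c) ∈ S := by
    intro v hv c hc
    have hv' := hv
    rw [hS] at hv'
    obtain ⟨⟨hv1, hv0, hv0'⟩, hvm⟩ := hv'
    have hsc : star c ∈ K := hstarK c hc
    have hE : E11 hn (star c) ∈ m' := (hmemK (star c)).1 hsc
    have h := hR v hvm (E11 hn (star c)) hE (Hp hn) hHp
    rw [aux2 hn (star c) v hv1 hv0, star_star] at h
    rw [hS]
    refine ⟨⟨fun i => ?_, ?_, ?_⟩, h⟩
    · simp [hv1]
    · simp [hv0]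
    · simp [hv0']
  refine ⟨⟨h1K, ?_, ⟨p.comap L, hKP⟩⟩, hii, hiii, ?_⟩
  · -- multiplicative closure
    intro c hc d hd
    obtain ⟨v₀, hv₀S, hv₀ne⟩ := hne
    have hv₀' := hv₀S
    rw [hS] at hv₀'
    obtain ⟨⟨hv1, -, -⟩, -⟩ := hv₀'
    set r : ℝ := ∑ i, Quaternion.normSq (v₀ i 0) with hr
    have hrpos : 0 < r := by
      have hex : ∃ i, v₀ i 0 ≠ 0 := by
        by_contra hco
        push_neg at hco
        apply hv₀ne
        refine Matrix.ext fun i j => ?_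
        fin_cases j
        · simpa using hco i
        · simpa using hv1 i
      obtain ⟨i₀, hi₀⟩ := hex
      refine Finset.sum_pos' (fun i _ => Quaternion.normSq_nonneg) ⟨i₀, Finset.mem_univ _, ?_⟩
      exact lt_of_le_of_ne Quaternion.normSq_nonneg
        (fun h => hi₀ (Quaternion.normSq_eq_zero.1 h.symm))
    have hw' : (Matrix.of fun i j => v₀ i j * d) ∈ S := hii v₀ hv₀S d hd
    have hk := hgen c hc v₀ hv₀S _ hw'
    have hvipeq : vip (_root_.col 0 v₀) (_root_.col 0 (Matrix.of fun i j => v₀ i j * d))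
        = (r : ℍq) * d := by
      have : ((r : ℝ) : ℍq) = ∑ i, ((Quaternion.normSq (v₀ i 0) : ℝ) : ℍq) := by
        rw [hr, ← Quaternion.algebraMap_def]
        exact map_sum (algebraMap ℝ ℍq) _ _
      rw [this, Finset.sum_mul, vip]
      refine Finset.sum_congr rfl fun i _ => ?_
      simp only [_root_.col, Matrix.of_apply, ← mul_assoc, Quaternion.star_mul_self]
    rw [hvipeq, ← mul_assoc, ← Quaternion.coe_commutes, mul_assoc] at hk
    have := hsmulK r⁻¹ _ hk
    rwa [← mul_assoc, ← Quaternion.coe_mul, inv_mul_cancel₀ (ne_of_gt hrpos),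
      Quaternion.coe_one, one_mul] at this
  · -- (iv)
    intro v hv c hc w hw
    have hv' := hv
    have hw' := hw
    rw [hS] at hv' hw'
    obtain ⟨⟨hv1, -, -⟩, -⟩ := hv'
    obtain ⟨⟨hw1, -, -⟩, -⟩ := hw'
    have hqip : qip (Matrix.of fun i j => v i j * c) w
        = star c * vip (_root_.col 0 v) (_root_.col 0 w) := by
      simp only [qip, Matrix.trace, Matrix.diag, Matrix.mul_apply,
        Matrix.conjTranspose_apply, Matrix.of_apply, Fin.sum_univ_two, hw1, hv1,
        mul_zero, zero_mul, star_zero, Finset.sum_const_zero, add_zero, vip, _root_.col,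
        StarMul.star_mul, Finset.mul_sum, mul_assoc]
    rw [hqip]
    exact hc _ (hiii v hv w hw)


end
end

section
/- If U ⊆ ℍⁿ is an ℝ-subspace that is quaternionic, or totally complex with respect to some unit imaginary quaternion, or totally real, then ι₊(U) + ι₋(U) (the set of matrices whose first and second columns both lie in U) is a Lie triple system of m. (These are the Lie triple systems of type (G₂, τ), corresponding to the totally geodesic submanifolds G₂(K^{ℓ+2}) ⊆ G₂(ℍ^{n+2}) for K = ℍ, ℂ, ℝ.) -/
open Matrix

noncomputable section

/-- `U ⊆ ℍⁿ` is quaternionic: stable under right multiplication by all quaternions. -/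
def IsQuatSub {n : ℕ} (U : Submodule ℝ (Fin n → ℍq)) : Prop :=
  ∀ u ∈ U, ∀ c : ℍq, rightMulV u c ∈ U

/-- `U ⊆ ℍⁿ` is totally complex with respect to some unit imaginary quaternion `i`:
`U·i ⊆ U` and `U·j ⟂ U` for every unit imaginary quaternion `j` orthogonal to `i`. -/
def IsTotCplx {n : ℕ} (U : Submodule ℝ (Fin n → ℍq)) : Prop :=
  ∃ i : ℍq, i.re = 0 ∧ Quaternion.normSq i = 1 ∧ (∀ u ∈ U, rightMulV u i ∈ U) ∧
    ∀ j : ℍq, j.re = 0 → Quaternion.normSq j = 1 → (star i * j).re = 0 →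
      ∀ u ∈ U, ∀ u' ∈ U, (vip (rightMulV u j) u').re = 0

/-- `U ⊆ ℍⁿ` is totally real: `U·c ⟂ U` for every imaginary quaternion `c`. -/
def IsTotReal {n : ℕ} (U : Submodule ℝ (Fin n → ℍq)) : Prop :=
  ∀ c : ℍq, c.re = 0 → ∀ u ∈ U, ∀ u' ∈ U, (vip (rightMulV u c) u').re = 0

/-- `U ⊆ ℍⁿ` is of type `(S³)`: a real-3-dimensional subspace of a quaternionic line. -/
def IsS3 {n : ℕ} (U : Submodule ℝ (Fin n → ℍq)) : Prop :=
  ∃ u₀ : Fin n → ℍq, (∀ u ∈ U, ∃ c : ℍq, u = rightMulV u₀ c) ∧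
    Module.finrank ℝ ↥U = 3

/-- `U` is of `ℍP`-type: quaternionic, totally complex, totally real, or of type `(S³)`. -/
def IsHPType {n : ℕ} (U : Submodule ℝ (Fin n → ℍq)) : Prop :=
  IsQuatSub U ∨ IsTotCplx U ∨ IsTotReal U ∨ IsS3 U

end

noncomputable section Aux13

lemma rightMulV_add' {n : ℕ} (c : Fin n → ℍq) (x y : ℍq) :
    rightMulV c (x + y) = rightMulV c x + rightMulV c y := by
  funext i; simp [rightMulV, mul_add]

lemma rightMulV_coe' {n : ℕ} (c : Fin n → ℍq) (r : ℝ) :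
    rightMulV c ((r : ℍq)) = r • c := by
  funext i; simp [rightMulV, Quaternion.mul_coe_eq_smul]

lemma rightMulV_smul' {n : ℕ} (c : Fin n → ℍq) (r : ℝ) (x : ℍq) :
    rightMulV c (r • x) = r • rightMulV c x := by
  funext i; simp [rightMulV, mul_smul_comm]

lemma vip_rightMulV' {n : ℕ} (a b : Fin n → ℍq) (x : ℍq) :
    vip (rightMulV a x) b = star x * vip a b := by
  simp [vip, rightMulV, Finset.mul_sum, StarMul.star_mul, mul_assoc]

lemma starmul_re' (x q : ℍq) :
    (star x * q).re = x.re * q.re + x.imI * q.imI + x.imJ * q.imJ + x.imK * q.imK := by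
  simp [Quaternion.re_mul]

lemma key13 {n : ℕ} {U : Submodule ℝ (Fin n → ℍq)}
    (hU : IsQuatSub U ∨ IsTotCplx U ∨ IsTotReal U)
    {a b c : Fin n → ℍq} (ha : a ∈ U) (hb : b ∈ U) (hc : c ∈ U) :
    rightMulV c (vip a b) ∈ U := by
  rcases hU with h | h | h
  · exact h c hc _
  · obtain ⟨i, hire, hinorm, hUi, horth⟩ := h
    set q := vip a b with hq
    have hstar : ∀ x : ℍq, x.re = 0 → Quaternion.normSq x = 1 → (star i * x).re = 0 →
        (star x * q).re = 0 := by
      intro x hx1 hx2 hx3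
      have := horth x hx1 hx2 hx3 a ha b hb
      rwa [vip_rightMulV'] at this
    set r := i.imI * q.imI + i.imJ * q.imJ + i.imK * q.imK with hr
    set p := q - ((q.re : ℝ) : ℍq) - r • i with hp
    have hnormi : i.imI ^ 2 + i.imJ ^ 2 + i.imK ^ 2 = 1 := by
      have h2 := Quaternion.normSq_def' i
      rw [hire] at h2
      nlinarith [hinorm]
    have hpre : p.re = 0 := by
      simp [hp, hire]
    have hip : (star i * p).re = 0 := by
      rw [starmul_re']
      simp only [hp, hr, Quaternion.imI_sub, Quaternion.imJ_sub, Quaternion.imK_sub,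
        Quaternion.re_sub, Quaternion.re_coe, Quaternion.imI_coe, Quaternion.imJ_coe,
        Quaternion.imK_coe, Quaternion.imI_smul, Quaternion.imJ_smul, Quaternion.imK_smul,
        Quaternion.re_smul, hire, smul_eq_mul]
      linear_combination (-(i.imI * q.imI + i.imJ * q.imJ + i.imK * q.imK)) * hnormi
    have hp0 : p = 0 := by
      by_contra hne
      have hns : 0 < Quaternion.normSq p := by
        have := Quaternion.normSq_ne_zero (a := p)
        have h' : Quaternion.normSq p ≠ 0 := by simpa using this.mpr hne
        have hnn : 0 ≤ Quaternion.normSq p := Quaternion.normSq_nonneg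
        exact lt_of_le_of_ne hnn (Ne.symm h')
      set s : ℝ := Real.sqrt (Quaternion.normSq p) with hs
      have hspos : 0 < s := Real.sqrt_pos.mpr hns
      have hs2 : s ^ 2 = Quaternion.normSq p := Real.sq_sqrt (le_of_lt hns)
      set j : ℍq := s⁻¹ • p with hj
      have hjre : j.re = 0 := by simp [hj, hpre]
      have hjn : Quaternion.normSq j = 1 := by
        have : Quaternion.normSq j = s⁻¹ ^ 2 * Quaternion.normSq p := by
          simp [hj, Quaternion.normSq_def', Quaternion.re_smul, Quaternion.imI_smul,
            Quaternion.imJ_smul, Quaternion.imK_smul, smul_eq_mul]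
          ring
        rw [this, ← hs2]
        field_simp
      have hij : (star i * j).re = 0 := by
        rw [starmul_re'] at hip ⊢
        simp only [hj, Quaternion.re_smul, Quaternion.imI_smul, Quaternion.imJ_smul,
          Quaternion.imK_smul, smul_eq_mul]
        linear_combination s⁻¹ * hip
      have hjq := hstar j hjre hjn hij
      rw [starmul_re'] at hjq
      simp only [hj, Quaternion.re_smul, Quaternion.imI_smul, Quaternion.imJ_smul,
        Quaternion.imK_smul, smul_eq_mul] at hjq
      have hsinv : s⁻¹ ≠ 0 := inv_ne_zero (ne_of_gt hspos)
      have hfac : s⁻¹ * (p.re * q.re + p.imI * q.imI + p.imJ * q.imJ + p.imK * q.imK) = 0 := by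
        linear_combination hjq
      have hpq : p.re * q.re + p.imI * q.imI + p.imJ * q.imJ + p.imK * q.imK = 0 := by
        rcases mul_eq_zero.mp hfac with h' | h'
        · exact absurd h' hsinv
        · exact h'
      -- q components in terms of p
      have hqi : q.imI = p.imI + r * i.imI := by simp [hp]
      have hqj : q.imJ = p.imJ + r * i.imJ := by simp [hp]
      have hqk : q.imK = p.imK + r * i.imK := by simp [hp]
      rw [starmul_re'] at hip
      rw [hqi, hqj, hqk, hpre] at hpq
      rw [hpre] at hip
      have hnp : Quaternion.normSq p = 0 := by
        rw [Quaternion.normSq_def', hpre]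
        linear_combination hpq - r * hip
      exact absurd hnp (ne_of_gt hns)
    have hqdec : q = ((q.re : ℝ) : ℍq) + r • i := by
      have h2 : q - (((q.re : ℝ) : ℍq) + r • i) = 0 := by
        rw [← sub_sub]; exact hp0
      have := sub_eq_zero.mp h2
      exact this
    rw [hqdec, rightMulV_add', rightMulV_coe', rightMulV_smul']
    exact U.add_mem (U.smul_mem _ hc) (U.smul_mem _ (hUi c hc))
  · set q := vip a b with hq
    have hstar : ∀ x : ℍq, x.re = 0 → (star x * q).re = 0 := by
      intro x hx1
      have := h x hx1 a ha b hb
      rwa [vip_rightMulV'] at this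
    have h1 : q.imI = 0 := by
      have := hstar ⟨0, 1, 0, 0⟩ rfl
      replace this := (starmul_re' ⟨0, 1, 0, 0⟩ q).symm.trans this
      simpa using this
    have h2 : q.imJ = 0 := by
      have := hstar ⟨0, 0, 1, 0⟩ rfl
      replace this := (starmul_re' ⟨0, 0, 1, 0⟩ q).symm.trans this
      simpa using this
    have h3 : q.imK = 0 := by
      have := hstar ⟨0, 0, 0, 1⟩ rfl
      replace this := (starmul_re' ⟨0, 0, 0, 1⟩ q).symm.trans this
      simpa using this
    have hqr : q = ((q.re : ℝ) : ℍq) := by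
      ext <;> simp [h1, h2, h3]
    rw [hqr, rightMulV_coe']
    exact U.smul_mem _ hc

lemma colR13 {n : ℕ} (u v w : MatH n) (j : Fin 2) :
    col j (Rcurv u v w) = ∑ k : Fin 2,
      (rightMulV (col k u) (vip (col k v) (col j w))
        - rightMulV (col k v) (vip (col k u) (col j w))
        + rightMulV (col k w) (vip (col k v) (col j u))
        - rightMulV (col k w) (vip (col k u) (col j v))) := by
  funext i
  simp only [_root_.col, Rcurv, Matrix.add_apply, Matrix.sub_apply, Matrix.mul_apply,
    Matrix.conjTranspose_apply, Finset.sum_apply, Pi.add_apply, Pi.sub_apply,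
    rightMulV, vip, Fin.sum_univ_two, sub_mul, add_mul, mul_sub, mul_add,
    Finset.sum_sub_distrib, Finset.sum_add_distrib, Finset.mul_sum, mul_assoc]
  abel

/-- The column map as an `ℝ`-linear map. -/
def colLM13 (n : ℕ) (j : Fin 2) : MatH n →ₗ[ℝ] (Fin n → ℍq) where
  toFun v := col j v
  map_add' x y := by funext i; simp [_root_.col]
  map_smul' r x := by funext i; simp [_root_.col]

end Aux13

/-- The Lie triple systems of type `(G₂, τ)`: for a quaternionic, totally complex or totally
real subspace `U ⊆ ℍⁿ`, the set `ι₊(U) + ι₋(U)` of matrices both of whose columns lie in `U`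
is a Lie triple system of `m`. -/
theorem stmt13 (n : ℕ) (hn : 2 ≤ n) (U : Submodule ℝ (Fin n → ℍq))
    (hU : IsQuatSub U ∨ IsTotCplx U ∨ IsTotReal U) :
    IsLTS {v : MatH n | col 0 v ∈ U ∧ col 1 v ∈ U} := by
  constructor
  · refine ⟨U.comap (colLM13 n 0) ⊓ U.comap (colLM13 n 1), ?_⟩
    ext v
    simp [Submodule.mem_inf, colLM13, Set.mem_setOf_eq]
  · rintro u ⟨hu0, hu1⟩ v ⟨hv0, hv1⟩ w ⟨hw0, hw1⟩
    have hcu : ∀ k : Fin 2, col k u ∈ U := by intro k; fin_cases k <;> assumption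
    have hcv : ∀ k : Fin 2, col k v ∈ U := by intro k; fin_cases k <;> assumption
    have hcw : ∀ k : Fin 2, col k w ∈ U := by intro k; fin_cases k <;> assumption
    constructor <;>
    · rw [colR13]
      refine Submodule.sum_mem _ fun k _ => ?_
      exact U.sub_mem (U.add_mem (U.sub_mem
        (key13 hU (hcv k) (hcw _) (hcu k)) (key13 hU (hcu k) (hcw _) (hcv k)))
        (key13 hU (hcv k) (hcu _) (hcw k))) (key13 hU (hcu k) (hcv _) (hcw k))
end

section
/- If U₁, U₂ ⊆ ℍⁿ are ℝ-subspaces, each of ℍP-type, with ⟨u₁, u₂⟩ = 0 for all u₁ ∈ U₁ and u₂ ∈ U₂, then ι₊(U₁) + ι₋(U₂) (the set of matrices whose first column lies in U₁ and whose second column lies in U₂) is a Lie triple system of m. (These are the Lie triple systems of type (P×P, τ₁, τ₂), corresponding to products of totally geodesic projective subspaces of the two factors.) -/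
open Matrix

/-! ### Auxiliary lemmas for `stmt14` -/

section Stmt14Aux

open Quaternion

/-- Real part of `star a * b` in components. -/
lemma reSt (a b : ℍq) : (star a * b).re =
    a.re*b.re + a.imI*b.imI + a.imJ*b.imJ + a.imK*b.imK := by
  simp [Quaternion.re_mul]

lemma vip_rmv_left {n : ℕ} (u u' : Fin n → ℍq) (c : ℍq) :
    vip (rightMulV u c) u' = star c * vip u u' := by
  simp [vip, rightMulV, Finset.mul_sum, mul_assoc]

lemma vip_rmv_right {n : ℕ} (u u' : Fin n → ℍq) (c : ℍq) :
    vip u (rightMulV u' c) = vip u u' * c := by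
  simp [vip, rightMulV, Finset.sum_mul, mul_assoc]

lemma star_vip {n : ℕ} (a b : Fin n → ℍq) : star (vip a b) = vip b a := by
  simp [vip, star_sum]

lemma rmv_rmv {n : ℕ} (u : Fin n → ℍq) (c d : ℍq) :
    rightMulV (rightMulV u c) d = rightMulV u (c * d) := by
  funext i; simp [rightMulV, mul_assoc]

lemma rmv_coe {n : ℕ} (u : Fin n → ℍq) (r : ℝ) : rightMulV u ((r : ℝ) : ℍq) = r • u := by
  funext i; simp [rightMulV, Quaternion.mul_coe_eq_smul]

lemma rmv_smul {n : ℕ} (u : Fin n → ℍq) (r : ℝ) (c : ℍq) :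
    rightMulV u (r • c) = r • rightMulV u c := by
  funext i; simp [rightMulV, mul_smul_comm]

lemma rmv_add {n : ℕ} (u : Fin n → ℍq) (c d : ℍq) :
    rightMulV u (c + d) = rightMulV u c + rightMulV u d := by
  funext i; simp [rightMulV, mul_add]

lemma rmv_sub {n : ℕ} (u : Fin n → ℍq) (c d : ℍq) :
    rightMulV u (c - d) = rightMulV u c - rightMulV u d := by
  funext i; simp [rightMulV, mul_sub]

lemma rmv_zero {n : ℕ} (u : Fin n → ℍq) : rightMulV u 0 = 0 := by
  funext i; simp [rightMulV]

/-- The key quaternion identity (curvature of `ℍP¹`). -/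
lemma quatIdent (α β γ : ℍq) :
    α * (star β * γ) - β * (star α * γ) + γ * (star β * α - star α * β) =
      (4*(star β * γ).re) • α - (4*(star α * γ).re) • β := by
  ext <;>
    simp [Quaternion.re_mul, Quaternion.imI_mul, Quaternion.imJ_mul, Quaternion.imK_mul] <;>
    ring

/-- A quaternion orthogonal to all imaginary quaternions is real. -/
lemma quatReal (q : ℍq)
    (h : ∀ c : ℍq, c.re = 0 → (star c * q).re = 0) : q = (q.re : ℍq) := by
  have h1 := h ⟨0,1,0,0⟩ rfl
  have h2 := h ⟨0,0,1,0⟩ rfl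
  have h3 := h ⟨0,0,0,1⟩ rfl
  replace h1 := (reSt _ q).symm.trans h1
  replace h2 := (reSt _ q).symm.trans h2
  replace h3 := (reSt _ q).symm.trans h3
  simp [Quaternion.re_mul, Quaternion.ext_iff] at h1 h2 h3 ⊢
  exact ⟨h1, h2, h3⟩

/-- A quaternion orthogonal to all unit imaginary quaternions that are orthogonal to a fixed
unit imaginary quaternion `i` lies in the real span of `1` and `i`. -/
lemma quatDecomp (i q : ℍq) (hire : i.re = 0) (hi : Quaternion.normSq i = 1)
    (h : ∀ j : ℍq, j.re = 0 → Quaternion.normSq j = 1 → (star i * j).re = 0 →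
      (star j * q).re = 0) :
    q = (q.re : ℍq) + ((star i * q).re) • i := by
  have hnormi : i.re^2 + i.imI^2 + i.imJ^2 + i.imK^2 = 1 := by
    rw [← Quaternion.normSq_def']; exact hi
  have key : ∀ j : ℍq, j.re = 0 → (star i * j).re = 0 → (star j * q).re = 0 := by
    intro j hjre hij
    rcases eq_or_ne j 0 with rfl | hj0
    · simp
    · have hNpos : 0 < Quaternion.normSq j :=
        lt_of_le_of_ne Quaternion.normSq_nonneg (Ne.symm (Quaternion.normSq_ne_zero.mpr hj0))
      set t : ℝ := Real.sqrt (Quaternion.normSq j) with ht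
      have htpos : 0 < t := Real.sqrt_pos.mpr hNpos
      have ht2 : t^2 = Quaternion.normSq j := Real.sq_sqrt (Quaternion.normSq_nonneg)
      have hj := h (t⁻¹ • j) (by simp [hjre]) ?_ ?_
      · have e : (star (t⁻¹ • j) * q).re = t⁻¹ * (star j * q).re := by
          simp [reSt]; try ring
        rw [e] at hj
        rcases mul_eq_zero.mp hj with h' | h'
        · exact absurd h' (inv_ne_zero htpos.ne')
        · exact h'
      · rw [Quaternion.normSq_def']
        simp only [Quaternion.re_smul, Quaternion.imI_smul, Quaternion.imJ_smul,
          Quaternion.imK_smul, smul_eq_mul]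
        rw [Quaternion.normSq_def'] at ht2
        field_simp
        nlinarith [ht2]
      · have e : (star i * (t⁻¹ • j)).re = t⁻¹ * (star i * j).re := by
          simp [reSt]; try ring
        rw [e, hij, mul_zero]
  set S : ℝ := (star i * q).re with hS
  set p : ℍq := q - (q.re : ℍq) - S • i with hp
  clear_value S p
  have hpre : p.re = 0 := by simp [hp, hire]
  have hpi : (star i * p).re = 0 := by
    rw [hp, hS]
    simp only [reSt, Quaternion.re_sub, Quaternion.imI_sub, Quaternion.imJ_sub,
      Quaternion.imK_sub, Quaternion.re_smul, Quaternion.imI_smul, Quaternion.imJ_smul,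
      Quaternion.imK_smul, Quaternion.re_coe, Quaternion.imI_coe, Quaternion.imJ_coe,
      Quaternion.imK_coe, smul_eq_mul, hire]
    simp only [hire] at hnormi
    linear_combination (-(i.imI*q.imI + i.imJ*q.imJ + i.imK*q.imK)) * hnormi
  have hpq : (star p * q).re = 0 := key p hpre hpi
  have hpp : (star p * p).re = 0 := by
    have e : (star p * p).re = (star p * q).re - q.re * p.re - S * (star i * p).re := by
      rw [hp, hS]
      simp only [reSt, Quaternion.re_sub, Quaternion.imI_sub, Quaternion.imJ_sub,
        Quaternion.imK_sub, Quaternion.re_smul, Quaternion.imI_smul, Quaternion.imJ_smul,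
        Quaternion.imK_smul, Quaternion.re_coe, Quaternion.imI_coe, Quaternion.imJ_coe,
        Quaternion.imK_coe, smul_eq_mul]
      ring
    rw [e, hpq, hpre, hpi]; ring
  rw [reSt] at hpp
  have nn := mul_self_nonneg p.re
  have nI := mul_self_nonneg p.imI
  have nJ := mul_self_nonneg p.imJ
  have nK := mul_self_nonneg p.imK
  have hI : p.imI = 0 := mul_self_eq_zero.mp (by linarith)
  have hJ : p.imJ = 0 := mul_self_eq_zero.mp (by linarith)
  have hK : p.imK = 0 := mul_self_eq_zero.mp (by linarith)
  have hp0 : p = 0 := by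
    ext
    · rw [hpre]; rfl
    · rw [hI]; rfl
    · rw [hJ]; rfl
    · rw [hK]; rfl
  have e2 : q - ((q.re : ℍq) + S • i) = p := by rw [hp]; abel
  rw [hp0] at e2
  exact (sub_eq_zero.mp e2)

lemma coe_add_smul_sub_star (r s : ℝ) (i : ℍq) (hire : i.re = 0) :
    (((r : ℝ) : ℍq) + s • i) - star (((r : ℝ) : ℍq) + s • i) = (2*s) • i := by
  ext <;> simp [hire] <;> ring

/-- The vector-level curvature expression for a single column. -/
noncomputable def RH {n : ℕ} (a b c : Fin n → ℍq) : Fin n → ℍq :=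
  rightMulV a (vip b c) - rightMulV b (vip a c) + rightMulV c (vip b a - vip a b)

lemma RH_mem {n : ℕ} (U : Submodule ℝ (Fin n → ℍq)) (hU : IsHPType U)
    {a b c : Fin n → ℍq} (ha : a ∈ U) (hb : b ∈ U) (hc : c ∈ U) :
    RH a b c ∈ U := by
  rcases hU with hQ | hC | hR | hS
  · exact U.add_mem (U.sub_mem (hQ a ha _) (hQ b hb _)) (hQ c hc _)
  · obtain ⟨i, hire, hinorm, hclosed, horthj⟩ := hC
    have dec : ∀ x ∈ U, ∀ y ∈ U,
        vip x y = (((vip x y).re : ℝ) : ℍq) + ((star i * vip x y).re) • i := by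
      intro x hx y hy
      apply quatDecomp i _ hire hinorm
      intro j hjre hjn hij
      have hh := horthj j hjre hjn hij x hx y hy
      rwa [vip_rmv_left] at hh
    have mem1 : ∀ x ∈ U, ∀ y ∈ U, ∀ z ∈ U, rightMulV x (vip y z) ∈ U := by
      intro x hx y hy z hz
      rw [dec y hy z hz, rmv_add, rmv_coe, rmv_smul]
      exact U.add_mem (U.smul_mem _ hx) (U.smul_mem _ (hclosed x hx))
    have e3 : vip b a - vip a b = (2 * (star i * vip b a).re) • i := by
      rw [← star_vip b a]
      conv_lhs => rw [dec b hb a ha]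
      exact coe_add_smul_sub_star _ _ i hire
    rw [RH, e3, rmv_smul]
    exact U.add_mem (U.sub_mem (mem1 a ha b hb c hc) (mem1 b hb a ha c hc))
      (U.smul_mem _ (hclosed c hc))
  · have real : ∀ x ∈ U, ∀ y ∈ U, vip x y = (((vip x y).re : ℝ) : ℍq) := by
      intro x hx y hy
      apply quatReal
      intro cc hcc
      have hh := hR cc hcc x hx y hy
      rwa [vip_rmv_left] at hh
    have e3 : vip b a - vip a b = 0 := by
      rw [← star_vip b a]
      conv_lhs => rw [real b hb a ha]
      simp
    rw [RH, e3, rmv_zero, real b hb c hc, real a ha c hc, rmv_coe, rmv_coe]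
    exact U.add_mem (U.sub_mem (U.smul_mem _ ha) (U.smul_mem _ hb)) U.zero_mem
  · obtain ⟨u₀, hline, -⟩ := hS
    obtain ⟨α, hα⟩ := hline a ha
    obtain ⟨β, hβ⟩ := hline b hb
    obtain ⟨γ, hγ⟩ := hline c hc
    set N : ℝ := (vip u₀ u₀).re with hN
    have hreal : vip u₀ u₀ = ((N : ℝ) : ℍq) := by
      have e : vip u₀ u₀ = algebraMap ℝ ℍq (∑ k, Quaternion.normSq (u₀ k)) := by
        rw [vip, map_sum]
        refine Finset.sum_congr rfl fun k _ => ?_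
        rw [Quaternion.algebraMap_def]
        exact Quaternion.star_mul_self _
      rw [hN, e, Quaternion.algebraMap_def]
      simp
    have hv : ∀ x y : ℍq, vip (rightMulV u₀ x) (rightMulV u₀ y) = N • (star x * y) := by
      intro x y
      rw [vip_rmv_left, vip_rmv_right, hreal, Quaternion.coe_mul_eq_smul, mul_smul_comm]
    have key : RH a b c =
        (N * (4*(star β * γ).re)) • a - (N * (4*(star α * γ).re)) • b := by
      rw [RH, hα, hβ, hγ, hv, hv, hv, hv, ← smul_sub, rmv_smul, rmv_smul, rmv_smul,
        rmv_rmv, rmv_rmv, rmv_rmv, ← smul_sub, ← smul_add, ← rmv_sub, ← rmv_add,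
        quatIdent, rmv_sub, rmv_smul, rmv_smul, smul_sub, smul_smul, smul_smul]
    rw [key]
    exact U.sub_mem (U.smul_mem _ ha) (U.smul_mem _ hb)

lemma col_add {n : ℕ} (j : Fin 2) (x y : MatH n) :
    _root_.col j (x + y) = _root_.col j x + _root_.col j y := by
  funext i; simp [_root_.col]

lemma col_smul {n : ℕ} (j : Fin 2) (r : ℝ) (x : MatH n) :
    _root_.col j (r • x) = r • _root_.col j x := by
  funext i; simp [_root_.col]

lemma col_zero {n : ℕ} (j : Fin 2) : _root_.col j (0 : MatH n) = 0 := by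
  funext i; simp [_root_.col]

lemma col_Rcurv0 {n : ℕ} (u v w : MatH n)
    (h1 : vip (_root_.col 1 v) (_root_.col 0 w) = 0)
    (h2 : vip (_root_.col 1 u) (_root_.col 0 w) = 0)
    (h3 : vip (_root_.col 1 v) (_root_.col 0 u) = 0)
    (h4 : vip (_root_.col 1 u) (_root_.col 0 v) = 0) :
    _root_.col 0 (Rcurv u v w) = RH (_root_.col 0 u) (_root_.col 0 v) (_root_.col 0 w) := by
  funext i
  simp only [vip, _root_.col] at h1 h2 h3 h4
  simp only [Rcurv, RH, rightMulV, _root_.col, vip, Matrix.add_apply, Matrix.sub_apply,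
    Matrix.mul_apply, Matrix.conjTranspose_apply, Fin.sum_univ_two,
    Pi.add_apply, Pi.sub_apply]
  simp only [sub_mul, add_mul, Finset.sum_sub_distrib, Finset.sum_add_distrib,
    mul_assoc, ← Finset.mul_sum]
  rw [h1, h2, h3, h4]
  simp only [mul_zero, sub_zero, add_zero, zero_sub, zero_add, mul_sub]
  try abel

lemma col_Rcurv1 {n : ℕ} (u v w : MatH n)
    (h1 : vip (_root_.col 0 v) (_root_.col 1 w) = 0)
    (h2 : vip (_root_.col 0 u) (_root_.col 1 w) = 0)
    (h3 : vip (_root_.col 0 v) (_root_.col 1 u) = 0)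
    (h4 : vip (_root_.col 0 u) (_root_.col 1 v) = 0) :
    _root_.col 1 (Rcurv u v w) = RH (_root_.col 1 u) (_root_.col 1 v) (_root_.col 1 w) := by
  funext i
  simp only [vip, _root_.col] at h1 h2 h3 h4
  simp only [Rcurv, RH, rightMulV, _root_.col, vip, Matrix.add_apply, Matrix.sub_apply,
    Matrix.mul_apply, Matrix.conjTranspose_apply, Fin.sum_univ_two,
    Pi.add_apply, Pi.sub_apply]
  simp only [sub_mul, add_mul, Finset.sum_sub_distrib, Finset.sum_add_distrib,
    mul_assoc, ← Finset.mul_sum]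
  rw [h1, h2, h3, h4]
  simp only [mul_zero, sub_zero, add_zero, zero_sub, zero_add, mul_sub]
  try abel

end Stmt14Aux

/-- The Lie triple systems of type `(P×P, τ₁, τ₂)`: for `⟨·,·⟩`-orthogonal subspaces
`U₁, U₂ ⊆ ℍⁿ` of `ℍP`-type, the set `ι₊(U₁) + ι₋(U₂)` of matrices whose first column lies
in `U₁` and whose second column lies in `U₂` is a Lie triple system of `m`. -/
theorem stmt14 (n : ℕ) (hn : 2 ≤ n) (U₁ U₂ : Submodule ℝ (Fin n → ℍq))
    (h1 : IsHPType U₁) (h2 : IsHPType U₂)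
    (horth : ∀ u₁ ∈ U₁, ∀ u₂ ∈ U₂, vip u₁ u₂ = 0) :
    IsLTS {v : MatH n | col 0 v ∈ U₁ ∧ col 1 v ∈ U₂} := by
  classical
  let p : Submodule ℝ (MatH n) :=
    { carrier := {v : MatH n | _root_.col 0 v ∈ U₁ ∧ _root_.col 1 v ∈ U₂}
      add_mem' := by
        rintro x y ⟨hx1, hx2⟩ ⟨hy1, hy2⟩
        exact ⟨by rw [col_add]; exact U₁.add_mem hx1 hy1,
          by rw [col_add]; exact U₂.add_mem hx2 hy2⟩
      zero_mem' := ⟨by rw [col_zero]; exact U₁.zero_mem,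
          by rw [col_zero]; exact U₂.zero_mem⟩
      smul_mem' := by
        rintro r x ⟨hx1, hx2⟩
        exact ⟨by rw [col_smul]; exact U₁.smul_mem r hx1,
          by rw [col_smul]; exact U₂.smul_mem r hx2⟩ }
  refine ⟨⟨p, rfl⟩, ?_⟩
  rintro u ⟨hu1, hu2⟩ v ⟨hv1, hv2⟩ w ⟨hw1, hw2⟩
  have flip : ∀ x ∈ U₂, ∀ y ∈ U₁, vip x y = 0 := by
    intro x hx y hy
    rw [← star_vip y x, horth y hy x hx, star_zero]
  constructor
  · rw [col_Rcurv0 u v w (flip _ hv2 _ hw1) (flip _ hu2 _ hw1)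
      (flip _ hv2 _ hu1) (flip _ hu2 _ hv1)]
    exact RH_mem U₁ h1 hu1 hv1 hw1
  · rw [col_Rcurv1 u v w (horth _ hv1 _ hw2) (horth _ hu1 _ hw2)
      (horth _ hv1 _ hu2) (horth _ hu1 _ hv2)]
    exact RH_mem U₂ h2 hu2 hv2 hw2
end

section
/- Let Φ ∈ Matrix (Fin n) (Fin 2) ℍ satisfy Φᴴ·Φ = 1 (an ℍ-linear isometric embedding ℍ² → ℍⁿ). Then m' := {Φ·X : X ∈ Matrix (Fin 2) (Fin 2) ℍ with Xᴴ = −X} is a Lie triple system of m of real dimension 10. (This is the Lie triple system of type (Sp₂), corresponding to a totally geodesic submanifold isometric to the Lie group Sp(2).) -/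
open Matrix

noncomputable section

noncomputable section StmtAux


instance : StarModule ℝ (Quaternion ℝ) :=
  ⟨fun r q => by ext <;> simp⟩

abbrev M2' : Type := Matrix (Fin 2) (Fin 2) ℍq

/-- The submodule of skew-Hermitian 2×2 quaternionic matrices. -/
def skewS : Submodule ℝ M2' where
  carrier := {X | Xᴴ = -X}
  add_mem' := by
    intro a b ha hb
    simp only [Set.mem_setOf_eq] at *
    rw [conjTranspose_add, ha, hb, neg_add]
  zero_mem' := by simp
  smul_mem' := by
    intro r x hx
    simp only [Set.mem_setOf_eq] at *
    rw [conjTranspose_smul, hx, star_trivial, smul_neg]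

lemma mem_skewS {X : M2'} : X ∈ skewS ↔ Xᴴ = -X := Iff.rfl

abbrev TT : Type := (ℝ × ℝ × ℝ) × (ℝ × ℝ × ℝ) × ℍq

def gmat (t : TT) : M2' :=
  !![⟨0, t.1.1, t.1.2.1, t.1.2.2⟩, -star t.2.2;
     t.2.2, ⟨0, t.2.1.1, t.2.1.2.1, t.2.1.2.2⟩]

lemma gmat_mem (t : TT) : gmat t ∈ skewS := by
  show (gmat t)ᴴ = -(gmat t)
  apply Matrix.ext; intro i j
  fin_cases i <;> fin_cases j <;>
    simp [gmat, conjTranspose_apply, Quaternion.ext_iff]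
  all_goals exact ⟨by show (0:ℝ) + 0 * _ = -0; simp, rfl, rfl, rfl⟩

def fwd : skewS →ₗ[ℝ] TT where
  toFun X := ((((X : M2') 0 0).imI, ((X : M2') 0 0).imJ, ((X : M2') 0 0).imK),
    (((X : M2') 1 1).imI, ((X : M2') 1 1).imJ, ((X : M2') 1 1).imK), (X : M2') 1 0)
  map_add' X Y := by
    simp [TT, Prod.ext_iff]
  map_smul' r X := by
    simp [TT, Prod.ext_iff]

def eqv : skewS ≃ₗ[ℝ] TT :=
  { fwd with
    invFun := fun t => ⟨gmat t, gmat_mem t⟩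
    left_inv := by
      rintro ⟨X, hX⟩
      have h : ∀ i j, star (X j i) = -(X i j) := fun i j =>
        (congr_fun (congr_fun hX i) j)
      have h00 : (X 0 0).re = 0 := by
        have := congrArg QuaternionAlgebra.re (h 0 0); simp at this; linarith
      have h11 : (X 1 1).re = 0 := by
        have := congrArg QuaternionAlgebra.re (h 1 1); simp at this; linarith
      have h01 : X 0 1 = -star (X 1 0) := by
        rw [h 0 1]; simp
      apply Subtype.ext
      show gmat (((X 0 0).imI, (X 0 0).imJ, (X 0 0).imK),
        ((X 1 1).imI, (X 1 1).imJ, (X 1 1).imK), X 1 0) = X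
      apply Matrix.ext; intro i j
      fin_cases i <;> fin_cases j <;>
        simp [gmat, fwd, Quaternion.ext_iff, QuaternionAlgebra.ext_iff, h00, h11, h01]
      all_goals exact QuaternionAlgebra.ext (by simp [h00, h11]) rfl rfl rfl
    right_inv := by
      rintro ⟨⟨a, b, c⟩, ⟨d, e, f⟩, q⟩
      rfl }

lemma finrank_skewS : Module.finrank ℝ skewS = 10 := by
  rw [eqv.finrank_eq]
  show Module.finrank ℝ ((ℝ × ℝ × ℝ) × (ℝ × ℝ × ℝ) × Quaternion ℝ) = 10
  simp [Module.finrank_prod, Quaternion.finrank_eq_four]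

/-- Left multiplication by `Φ` as a real-linear map. -/
def lmulΦ {n : ℕ} (Φ : Matrix (Fin n) (Fin 2) ℍq) : M2' →ₗ[ℝ] MatH n where
  toFun X := Φ * X
  map_add' X Y := Matrix.mul_add Φ X Y
  map_smul' r X := by simp [Matrix.mul_smul]

lemma lmulΦ_inj {n : ℕ} {Φ : Matrix (Fin n) (Fin 2) ℍq} (hΦ : Φᴴ * Φ = 1) :
    Function.Injective (lmulΦ Φ) := by
  intro X Y h
  have h2 := congrArg (fun M => Φᴴ * M) h
  simpa [lmulΦ, ← Matrix.mul_assoc, hΦ] using h2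

end StmtAux

/-- The Lie triple system of type `(Sp₂)`: for an `ℍ`-linear isometric embedding
`Φ : ℍ² → ℍⁿ` (i.e. `Φᴴ·Φ = 1`), the set `{Φ·X : Xᴴ = −X}` is a Lie triple system of `m`
of real dimension 10; the corresponding totally geodesic submanifold is isometric to `Sp(2)`. -/

theorem stmt15 (n : ℕ) (hn : 2 ≤ n) (Φ : Matrix (Fin n) (Fin 2) ℍq)
    (hΦ : Φᴴ * Φ = 1) :
    IsLTS {v : MatH n | ∃ X : Matrix (Fin 2) (Fin 2) ℍq, Xᴴ = -X ∧ v = Φ * X} ∧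
    ∀ p : Submodule ℝ (MatH n),
      (p : Set (MatH n)) =
        {v : MatH n | ∃ X : Matrix (Fin 2) (Fin 2) ℍq, Xᴴ = -X ∧ v = Φ * X} →
      Module.finrank ℝ ↥p = 10 := by
  have hA : ∀ W : M2', Φᴴ * (Φ * W) = W := by
    intro W; rw [← Matrix.mul_assoc, hΦ, Matrix.one_mul]
  have hset : ((skewS.map (lmulΦ Φ)) : Set (MatH n)) =
      {v : MatH n | ∃ X : Matrix (Fin 2) (Fin 2) ℍq, Xᴴ = -X ∧ v = Φ * X} := by
    ext v
    simp only [Submodule.map_coe, Set.mem_image, SetLike.mem_coe, mem_skewS,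
      Set.mem_setOf_eq, lmulΦ, LinearMap.coe_mk, AddHom.coe_mk]
    constructor
    · rintro ⟨X, hX, rfl⟩; exact ⟨X, hX, rfl⟩
    · rintro ⟨X, hX, rfl⟩; exact ⟨X, hX, rfl⟩
  constructor
  · constructor
    · exact ⟨skewS.map (lmulΦ Φ), hset⟩
    · rintro u ⟨X, hX, rfl⟩ v ⟨Y, hY, rfl⟩ w ⟨Z, hZ, rfl⟩
      refine ⟨(Y * X - X * Y) * Z - Z * (Y * X - X * Y), ?_, ?_⟩
      · simp only [conjTranspose_sub, conjTranspose_mul, hX, hY, hZ,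
          Matrix.neg_mul, Matrix.mul_neg, neg_neg, neg_sub]
        noncomm_ring
      · simp only [Rcurv, conjTranspose_mul, hX, hY, Matrix.sub_mul,
          Matrix.mul_sub, Matrix.neg_mul, Matrix.mul_neg, Matrix.mul_assoc, hA,
          neg_neg]
        abel
  · intro p hp
    have hps : p = skewS.map (lmulΦ Φ) :=
      SetLike.coe_injective (hp.trans hset.symm)
    rw [hps, ← LinearEquiv.finrank_eq
      (Submodule.equivMapOfInjective (lmulΦ Φ) (lmulΦ_inj hΦ) skewS),
      finrank_skewS]

end
end

section
/- For every ℝ-subspace C ⊆ ℍ, the real subspace m' := ℝ·H₊ + ℝ·H₋ + {M_{c,1} : c ∈ C} of m is a Lie triple system. (For dim_ℝ C = ℓ−1 ≥ 1 these are the Lie triple systems of type (S¹×S⁵, ℓ), whose corresponding totally geodesic submanifolds are isometric to (S¹_{r=1/√2} × S^ℓ_{r=1/√2})/{±id}; for ℓ = 5 this type is missing from Chen–Nagano's classification.) -/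
open Matrix

noncomputable section

namespace S16

lemma stdmul_same {l m o α : Type*} [Fintype m] [DecidableEq l] [DecidableEq m] [DecidableEq o]
    [NonUnitalNonAssocSemiring α] (i : l) (j : m) (k : o) (c d : α) :
    Matrix.single i j c * Matrix.single j k d = Matrix.single i k (c * d) := by
  ext a b
  simp only [Matrix.mul_apply, Matrix.single, Matrix.of_apply, ite_mul, mul_ite,
    zero_mul, mul_zero, ite_and]
  rw [Finset.sum_eq_single j]
  · by_cases h1 : i = a <;> by_cases h2 : k = b <;> simp [h1, h2]
  · intro x _ hx; simp [Ne.symm hx]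
  · simp

lemma stdmul_ne {l m o α : Type*} [Fintype m] [DecidableEq l] [DecidableEq m] [DecidableEq o]
    [NonUnitalNonAssocSemiring α] (i : l) {j j' : m} (k : o) (h : j ≠ j') (c d : α) :
    Matrix.single i j c * Matrix.single j' k d = 0 := by
  ext a b
  rw [Matrix.mul_apply, Matrix.zero_apply]
  apply Finset.sum_eq_zero
  intro x _
  by_cases h2 : j = x
  · have h3 : ¬(j' = x ∧ k = b) := fun hh => h (h2.trans hh.1.symm)
    simp [Matrix.single, h3]
  · simp [Matrix.single, h2]

lemma stdCT {l m α : Type*} [DecidableEq l] [DecidableEq m]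
    [AddMonoid α] [StarAddMonoid α] (i : l) (j : m) (c : α) :
    (Matrix.single i j c)ᴴ = Matrix.single j i (star c) := by
  ext a b
  simp only [Matrix.conjTranspose_apply, Matrix.single, Matrix.of_apply]
  by_cases h1 : i = b <;> by_cases h2 : j = a <;> simp [h1, h2]

variable {n : ℕ}

def σr : ℝ := (Real.sqrt 2)⁻¹

def ipr (a b : ℍq) : ℝ := (star a * b).re

lemma r0_ne_r1 (hn : 2 ≤ n) : r0 hn ≠ r1 hn := by
  simp [r0, r1, Fin.ext_iff]

lemma gen_eq (hn : 2 ≤ n) (s t : ℝ) (c : ℍq) :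
    s • Hp hn + t • Hm hn + Mce hn c 1 =
      Matrix.single (r0 hn) 0 (s • (1:ℍq)) + Matrix.single (r0 hn) 1 (σr • star c)
      + Matrix.single (r1 hn) 0 (σr • c) + Matrix.single (r1 hn) 1 (t • (1:ℍq)) := by
  unfold Hp Hm E11 E22 Mce σr
  rw [Matrix.smul_single, Matrix.smul_single, one_mul]
  abel

lemma hσ3 : σr ^ 3 = σr * (1/2) := by
  rw [pow_succ, mul_comm, σr, sq, ← mul_inv, Real.mul_self_sqrt (by norm_num : (0:ℝ) ≤ 2)]
  norm_num

lemma hσ2 : σr ^ 2 = 1/2 := by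
  rw [σr, sq, ← mul_inv, Real.mul_self_sqrt (by norm_num : (0:ℝ) ≤ 2)]
  norm_num

set_option maxHeartbeats 2000000 in
lemma key (hn : 2 ≤ n) (s t p q x y : ℝ) (a b d : ℍq) :
    Rcurv (s • Hp hn + t • Hm hn + Mce hn a 1) (p • Hp hn + q • Hm hn + Mce hn b 1)
        (x • Hp hn + y • Hm hn + Mce hn d 1) =
      ((s-t)*(ipr b d) - (p-q)*(ipr a d)) • Hp hn
        + (-((s-t)*(ipr b d) - (p-q)*(ipr a d))) • Hm hn
        + Mce hn (((x-y)*(p-q)+2*(ipr b d)) • a - ((x-y)*(s-t)+2*(ipr a d)) • b) 1 := by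
  have h01 : r0 hn ≠ r1 hn := r0_ne_r1 hn
  have h10 : r1 hn ≠ r0 hn := (r0_ne_r1 hn).symm
  rw [gen_eq, gen_eq, gen_eq, gen_eq, Rcurv]
  simp only [Matrix.conjTranspose_add, stdCT, Matrix.add_mul, Matrix.mul_add,
    Matrix.sub_mul, Matrix.mul_sub,
    stdmul_same, stdmul_ne _ _ h01, stdmul_ne _ _ h10,
    stdmul_ne _ _ (zero_ne_one' (Fin 2)), stdmul_ne _ _ (one_ne_zero' (Fin 2)),
    Matrix.zero_mul, Matrix.mul_zero, zero_add, add_zero, zero_sub, sub_zero, neg_zero]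
  apply Matrix.ext
  intro i j
  by_cases hi0 : i = r0 hn
  · subst hi0
    fin_cases j <;>
      · simp only [Matrix.add_apply, Matrix.sub_apply, Matrix.single, Matrix.of_apply]
        simp [h01, h10]
        ext <;> simp [ipr, Quaternion.re_one, Quaternion.imI_one, Quaternion.imJ_one, Quaternion.imK_one] <;> ring_nf <;> try (simp only [hσ2, hσ3]; ring)
  · by_cases hi1 : i = r1 hn
    · subst hi1
      fin_cases j <;>
        · simp only [Matrix.add_apply, Matrix.sub_apply, Matrix.single, Matrix.of_apply]
          simp [h01, h10]
          ext <;> simp [ipr, Quaternion.re_one, Quaternion.imI_one, Quaternion.imJ_one, Quaternion.imK_one] <;> ring_nf <;> try (simp only [hσ2, hσ3]; ring)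
    · fin_cases j <;>
        · simp only [Matrix.add_apply, Matrix.sub_apply, Matrix.single, Matrix.of_apply]
          simp [Ne.symm hi0, Ne.symm hi1]

end S16

namespace S16

variable {n : ℕ}

lemma Mce_add (hn : 2 ≤ n) (c c' : ℍq) :
    Mce hn (c + c') 1 = Mce hn c 1 + Mce hn c' 1 := by
  unfold Mce
  simp only [smul_add, star_add, Matrix.single_add]
  abel

lemma Mce_smul (hn : 2 ≤ n) (r : ℝ) (c : ℍq) :
    Mce hn (r • c) 1 = r • Mce hn c 1 := by
  unfold Mce
  simp only [smul_comm r, smul_add, Matrix.smul_single, Quaternion.star_smul]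

/-- The parametrization of the candidate subspace as a linear map. -/
def genL (hn : 2 ≤ n) : (ℝ × ℝ × ℍq) →ₗ[ℝ] MatH n where
  toFun z := z.1 • Hp hn + z.2.1 • Hm hn + Mce hn z.2.2 1
  map_add' z w := by
    simp only [Prod.fst_add, Prod.snd_add, Mce_add hn, add_smul]
    abel
  map_smul' r z := by
    simp only [Prod.smul_fst, Prod.smul_snd, smul_eq_mul, RingHom.id_apply,
      Mce_smul hn, mul_smul, smul_add]

end S16

end

noncomputable section

/-- The Lie triple systems of type `(S¹×S⁵, ℓ)`: for every real subspace `C ⊆ ℍ`, the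
subspace `ℝ·H₊ + ℝ·H₋ + {M_{c,1} : c ∈ C}` of `m` is a Lie triple system. -/
theorem stmt16 (n : ℕ) (hn : 2 ≤ n) (C : Submodule ℝ ℍq) :
    IsLTS {v : MatH n |
      ∃ s t : ℝ, ∃ c ∈ C, v = s • Hp hn + t • Hm hn + Mce hn c 1} := by
  constructor
  · refine ⟨Submodule.map (S16.genL hn)
      ((⊤ : Submodule ℝ ℝ).prod ((⊤ : Submodule ℝ ℝ).prod C)), ?_⟩
    ext v
    constructor
    · rintro ⟨⟨s, t, c⟩, hz, rfl⟩
      exact ⟨s, t, c, (by simpa using hz), rfl⟩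
    · rintro ⟨s, t, c, hc, rfl⟩
      exact ⟨(s, t, c), by simpa using hc, rfl⟩
  · rintro u ⟨s, t, a, ha, rfl⟩ v ⟨p, q, b, hb, rfl⟩ w ⟨x, y, d, hd, rfl⟩
    exact ⟨_, _, _,
      C.sub_mem (C.smul_mem _ ha) (C.smul_mem _ hb),
      S16.key hn s t p q x y a b d⟩

end
end

section
/- Let Q ⊆ ℍ be an ℝ-subspace with 1 ∈ Q, let U ⊆ ℍⁿ be a totally real ℝ-subspace with ⟨f₂, u⟩ = 0 for every u ∈ U (where f₂ is the second standard basis vector of ℍⁿ), and let Θ : Q → U be an ℝ-linear map satisfying Re⟨Θ(q), Θ(q')⟩ = Re(conj(q)·q') for all q, q' ∈ Q (an ℝ-linear isometry). Then m' := {q·E₂₂ + 2·ι₊(Θ(q)) : q ∈ Q} is a Lie triple system of m. (These are the Lie triple systems of type (P, φ=arctan(1/2), τ) with dim(τ) = 1; for Q = ℍ and Q 3-dimensional, these give totally geodesic ℍP¹ resp. S³ submanifolds missing from Chen–Nagano's classification.) -/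
open Matrix

noncomputable section

/-- `ι₊(u)`: the matrix with first column `u` and second column `0`. -/
def iotaPlus {n : ℕ} (u : Fin n → ℍq) : MatH n :=
  Matrix.of fun i j => if j = 0 then u i else 0


set_option maxHeartbeats 1000000 in
private lemma myQuatId (a b c : ℍq) :
    (a * star b - b * star a) * c + c * (star b * a - star a * b)
      = (((4 * (star b * c).re : ℝ)) : ℍq) * a - (((4 * (star a * c).re : ℝ)) : ℍq) * b := by
  ext <;> simp [Quaternion.re_mul, Quaternion.imI_mul, Quaternion.imJ_mul,
    Quaternion.imK_mul] <;> ring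

private lemma myCoeMul (r : ℝ) (x : ℍq) : ((r : ℍq)) * x = r • x := by
  ext <;> simp

private lemma myMulCoe (x : ℍq) (r : ℝ) : x * ((r : ℍq)) = r • x := by
  ext <;> simp [mul_comm]

private lemma myVipReal {n : ℕ} (U : Submodule ℝ (Fin n → ℍq)) (hU : IsTotReal U)
    (u u' : Fin n → ℍq) (hu : u ∈ U) (hu' : u' ∈ U) :
    vip u u' = (((vip u u').re : ℝ) : ℍq) := by
  have key : ∀ c : ℍq, c.re = 0 → (star c * vip u u').re = 0 := by
    intro c hc
    have h := hU c hc u hu u' hu'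
    have e : vip (rightMulV u c) u' = star c * vip u u' := by
      simp [vip, rightMulV, Finset.mul_sum, StarMul.star_mul, mul_assoc]
    rwa [e] at h
  simp [Quaternion.re_mul] at key
  have h1 := key ⟨0,1,0,0⟩ rfl
  have h2 := key ⟨0,0,1,0⟩ rfl
  have h3 := key ⟨0,0,0,1⟩ rfl
  simp [Quaternion.re_mul, QuaternionAlgebra.star_mk] at h1 h2 h3
  ext <;> simp_all

private def Nmat {n : ℕ} (hn : 2 ≤ n) (q : ℍq) (α : Fin n → ℍq) : MatH n :=
  Matrix.of fun i j => if j = 0 then (2:ℝ) • α i else if i = r1 hn then q else 0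

private lemma myLform {n : ℕ} (hn : 2 ≤ n) (q : ℍq) (α : Fin n → ℍq) :
    E22 hn q + (2:ℝ) • iotaPlus α = Nmat hn q α := by
  refine Matrix.ext fun i j => ?_
  fin_cases j <;>
    simp [E22, iotaPlus, Nmat, Matrix.single, Matrix.add_apply, Matrix.smul_apply,
      r1, Fin.ext_iff, eq_comm, -Fin.val_eq_zero_iff]

set_option maxHeartbeats 1000000 in
private lemma myKey {n : ℕ} (hn : 2 ≤ n) (a b c d : ℍq) (α β γ δ : Fin n → ℍq)
    (hα : α (r1 hn) = 0) (hβ : β (r1 hn) = 0) (hγ : γ (r1 hn) = 0)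
    (hβγ : ∑ x : Fin n, star (β x) * γ x = (((star b * c).re : ℝ) : ℍq))
    (hαγ : ∑ x : Fin n, star (α x) * γ x = (((star a * c).re : ℝ) : ℍq))
    (hβα : ∑ x : Fin n, star (β x) * α x = (((star b * a).re : ℝ) : ℍq))
    (hαβ : ∑ x : Fin n, star (α x) * β x = (((star a * b).re : ℝ) : ℍq))
    (hd : d = (a * star b - b * star a) * c + c * (star b * a - star a * b))
    (hδ : δ = (4 * (star b * c).re) • α - (4 * (star a * c).re) • β) :
    Rcurv (Nmat hn a α) (Nmat hn b β) (Nmat hn c γ) = Nmat hn d δ := by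
  refine Matrix.ext fun i j => ?_
  by_cases hi : i = r1 hn
  · subst hi
    fin_cases j
    · simp [Rcurv, Nmat, Matrix.mul_apply, Matrix.conjTranspose_apply, Fin.sum_univ_two,
        Matrix.sub_apply, Matrix.add_apply, ite_mul, mul_ite, Finset.sum_ite_eq',
        hα, hβ, hγ, hδ, smul_smul, mul_smul_comm, smul_mul_assoc, Finset.sum_add_distrib,
        Finset.sum_sub_distrib, add_mul, sub_mul, mul_add, mul_sub, smul_ite, smul_sub,
        smul_add, apply_ite (star : ℍq → ℍq)]
    · simp [Rcurv, Nmat, Matrix.mul_apply, Matrix.conjTranspose_apply, Fin.sum_univ_two,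
        Matrix.sub_apply, Matrix.add_apply, ite_mul, mul_ite, Finset.sum_ite_eq',
        hα, hβ, hγ, hd, smul_smul, mul_smul_comm, smul_mul_assoc, Finset.sum_add_distrib,
        Finset.sum_sub_distrib, add_mul, sub_mul, mul_add, mul_sub, smul_ite, smul_sub,
        smul_add, apply_ite (star : ℍq → ℍq)]
  · fin_cases j
    · simp [Rcurv, Nmat, Matrix.mul_apply, Matrix.conjTranspose_apply, Fin.sum_univ_two,
        Matrix.sub_apply, Matrix.add_apply, ite_mul, mul_ite, Finset.sum_ite_eq',
        hα, hβ, hγ, hδ, hi, smul_smul, mul_smul_comm, smul_mul_assoc, Finset.sum_add_distrib,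
        Finset.sum_sub_distrib, add_mul, sub_mul, mul_add, mul_sub, smul_ite, smul_sub,
        smul_add, apply_ite (star : ℍq → ℍq)]
      simp only [mul_assoc, ← Finset.smul_sum, ← Finset.mul_sum]
      rw [hβγ, hαγ, hβα, hαβ]
      have e1 : (star b * a).re = (star a * b).re := by
        simp [Quaternion.re_mul]; ring
      rw [e1]
      simp only [sub_self, add_zero, myMulCoe]
      simp only [Quaternion.re_mul, Quaternion.re_star, Quaternion.imI_star,
        Quaternion.imJ_star, Quaternion.imK_star]
      module
    · simp [Rcurv, Nmat, Matrix.mul_apply, Matrix.conjTranspose_apply, Fin.sum_univ_two,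
        Matrix.sub_apply, Matrix.add_apply, ite_mul, mul_ite, Finset.sum_ite_eq',
        hα, hβ, hγ, hi, smul_smul, mul_smul_comm, smul_mul_assoc, Finset.sum_add_distrib,
        Finset.sum_sub_distrib, add_mul, sub_mul, mul_add, mul_sub, smul_ite, smul_sub,
        smul_add, apply_ite (star : ℍq → ℍq)]

private def Lmap {n : ℕ} (hn : 2 ≤ n) (Q : Submodule ℝ ℍq)
    (Θ : ↥Q →ₗ[ℝ] (Fin n → ℍq)) : ↥Q →ₗ[ℝ] MatH n where
  toFun q := E22 hn (q : ℍq) + (2:ℝ) • iotaPlus (Θ q)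
  map_add' q q' := by
    refine Matrix.ext fun i j => ?_
    simp [E22, iotaPlus, Matrix.single, Matrix.add_apply, Matrix.smul_apply]
    split_ifs <;> module
  map_smul' r q := by
    refine Matrix.ext fun i j => ?_
    simp [E22, iotaPlus, Matrix.single, Matrix.add_apply, Matrix.smul_apply]
    split_ifs <;> first | rfl | exact smul_comm _ _ _ | simp

/-- The Lie triple systems of type `(P, φ=arctan(1/2), τ)` with `dim(τ) = 1`:
for a real subspace `Q ⊆ ℍ` with `1 ∈ Q`, a totally real subspace `U ⊆ ℍⁿ` orthogonal to
the second standard basis vector, and an `ℝ`-linear isometry `Θ : Q → U`, the set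
`{q·E₂₂ + 2·ι₊(Θ(q)) : q ∈ Q}` is a Lie triple system of `m`. -/
theorem stmt18 (n : ℕ) (hn : 2 ≤ n) (Q : Submodule ℝ ℍq) (h1 : (1 : ℍq) ∈ Q)
    (U : Submodule ℝ (Fin n → ℍq)) (hU : IsTotReal U)
    (hUorth : ∀ u ∈ U, vip (fun i => if i = r1 hn then 1 else 0) u = 0)
    (Θ : ↥Q →ₗ[ℝ] (Fin n → ℍq)) (hrange : ∀ q : ↥Q, Θ q ∈ U)
    (hisom : ∀ q q' : ↥Q, (vip (Θ q) (Θ q')).re = (star (q : ℍq) * (q' : ℍq)).re) :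
    IsLTS {v : MatH n | ∃ q : ↥Q, v = E22 hn (q : ℍq) + (2 : ℝ) • iotaPlus (Θ q)} := by
  have hrow : ∀ u ∈ U, u (r1 hn) = 0 := by
    intro u hu
    have h := hUorth u hu
    simpa [vip, apply_ite (star : ℍq → ℍq), ite_mul, Finset.sum_ite_eq'] using h
  have hvip : ∀ q q' : ↥Q, ∑ x : Fin n, star (Θ q x) * Θ q' x
      = (((star (q : ℍq) * (q' : ℍq)).re : ℝ) : ℍq) := by
    intro q q'
    have h := myVipReal U hU _ _ (hrange q) (hrange q')
    have h2 := hisom q q'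
    refine Eq.trans ?_ (congrArg _ h2)
    exact h
  constructor
  · refine ⟨LinearMap.range (Lmap hn Q Θ), ?_⟩
    ext v
    constructor
    · rintro ⟨q, rfl⟩; exact ⟨q, rfl⟩
    · rintro ⟨q, rfl⟩; exact ⟨q, rfl⟩
  · rintro u ⟨a, rfl⟩ v ⟨b, rfl⟩ w ⟨c, rfl⟩
    refine ⟨(4 * (star (b : ℍq) * (c : ℍq)).re) • a - (4 * (star (a : ℍq) * (c : ℍq)).re) • b, ?_⟩
    set d : ↥Q := (4 * (star (b : ℍq) * (c : ℍq)).re) • a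
      - (4 * (star (a : ℍq) * (c : ℍq)).re) • b with hdDef
    rw [myLform, myLform, myLform, myLform]
    refine myKey hn _ _ _ _ _ _ _ _ (hrow _ (hrange a)) (hrow _ (hrange b)) (hrow _ (hrange c))
      (hvip b c) (hvip a c) (hvip b a) (hvip a b) ?_ ?_
    · rw [myQuatId, myCoeMul, myCoeMul]
      simp [hdDef]
    · simp [hdDef, map_sub]

end
end
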